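/- arXiv:2006.12193 — 3 statements merged into one kernel-verified Lean document; each statement's English description precedes it below -/
import Mathlib

section
/- Let $K$ be a commutative $\mathbb{Q}$-algebra and define the partial derivative with respect to the multiplicative formal group law $x * y = x + y - xy$ by $(\partial G)(x_1, \dots, x_{n+1}) = G(x_1 * x_2, x_3, \dots) - G(x_1, x_3, \dots) - G(x_2, x_3, \dots) + G(0, x_3, \dots)$. Then for $n > 0$, the kernel of $\partial^{n-1}: K[[x]] \to K[[x_1, \dots, x_n]]$ is the $K$-linear span of $\lg_r(x) = \frac{1}{r!}(\log(1-x))^r$ for $0 \le r < n$. -/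
variable {K : Type*} [CommRing K] [Algebra ℚ K]

/-- Substitution of a multivariate power series with vanishing constant term into a
one-variable power series. -/
noncomputable def psubst {σ : Type*} (f : MvPowerSeries σ K) (G : PowerSeries K) :
    MvPowerSeries σ K :=
  fun d => ∑ n ∈ Finset.range ((d.sum fun _ e => e) + 1),
    PowerSeries.coeff n G * MvPowerSeries.coeff d (f ^ n)

/-- The iterated partial derivative `∂^{m-1} G` (with respect to the multiplicative formal
group law `x * y = x + y - xy`) of a one-variable power series, a power series in `m`
variables:  `(∂^{m-1} G)(x₁,…,x_m) = ∑_{I ⊆ {1,…,m}} (-1)^{m - |I|} G(x_I)`, where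
`x_I = 1 - ∏_{i ∈ I} (1 - x_i)` is the `*`-sum of the variables `x_i`, `i ∈ I`. -/
noncomputable def partialDeriv (m : ℕ) (G : PowerSeries K) : MvPowerSeries (Fin m) K :=
  ∑ I : Finset (Fin m),
    ((-1 : ℤ) ^ (m + I.card)) • psubst (1 - ∏ i ∈ I, (1 - MvPowerSeries.X i)) G

/-- The formal power series `log(1-x) = -∑_{i≥1} xⁱ/i`. -/
noncomputable def logOneSub : PowerSeries K :=
  PowerSeries.mk fun i => if i = 0 then 0 else algebraMap ℚ K (-(1 / (i : ℚ)))

/-- `lg_r(x) = (1/r!) (log(1-x))^r`. -/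
noncomputable def lg (r : ℕ) : PowerSeries K :=
  ((r.factorial : ℚ)⁻¹) • (logOneSub (K := K)) ^ r

set_option linter.unusedSectionVars false

namespace Aux

open MvPowerSeries Finset

variable {σ : Type*}

/-- degree of a multi-exponent -/
abbrev dg (d : σ →₀ ℕ) : ℕ := d.sum fun _ e => e

lemma dg_add (a b : σ →₀ ℕ) : dg (a + b) = dg a + dg b :=
  Finsupp.sum_add_index' (fun _ => rfl) (fun _ _ _ => rfl)

lemma coeff_psubst (f : MvPowerSeries σ K) (G : PowerSeries K) (d : σ →₀ ℕ) :
    MvPowerSeries.coeff (R := K) d (psubst f G) =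
      ∑ k ∈ range (dg d + 1), PowerSeries.coeff (R := K) k G * MvPowerSeries.coeff (R := K) d (f ^ k) := rfl

section order

variable {K' : Type*} [CommRing K']

lemma coeff_mul_order {A B : MvPowerSeries σ K'} {a b : ℕ}
    (hA : ∀ e, dg e < a → MvPowerSeries.coeff (R := K') e A = 0)
    (hB : ∀ e, dg e < b → MvPowerSeries.coeff (R := K') e B = 0)
    {e : σ →₀ ℕ} (he : dg e < a + b) :
    MvPowerSeries.coeff (R := K') e (A * B) = 0 := by
  classical
  rw [MvPowerSeries.coeff_mul]
  refine Finset.sum_eq_zero fun p hp => ?_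
  rw [Finset.HasAntidiagonal.mem_antidiagonal] at hp
  have hsum : dg p.1 + dg p.2 = dg e := by rw [← dg_add, hp]
  by_cases h1 : dg p.1 < a
  · rw [hA _ h1, zero_mul]
  · have : dg p.2 < b := by omega
    rw [hB _ this, mul_zero]

lemma coeff_pow_order {f : MvPowerSeries σ K'} (hf : MvPowerSeries.constantCoeff (σ := σ) (R := K') f = 0) (k : ℕ) :
    ∀ e : σ →₀ ℕ, dg e < k → MvPowerSeries.coeff (R := K') e (f ^ k) = 0 := by
  induction k with
  | zero => intro e he; omega
  | succ k ih =>
    intro e he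
    rw [pow_succ]
    refine coeff_mul_order (a := k) (b := 1) ih ?_ ?_
    · intro e' he'
      have : e' = 0 := by
        ext s
        by_contra hs
        have : 0 < e' s := Nat.pos_of_ne_zero hs
        have hmem : s ∈ e'.support := Finsupp.mem_support_iff.2 hs
        have : e' s ≤ dg e' := Finset.single_le_sum (f := fun s => e' s)
          (fun _ _ => Nat.zero_le _) hmem
        omega
      rw [this, MvPowerSeries.coeff_zero_eq_constantCoeff_apply, hf]
    · omega

end order

lemma coeff_psubst_stable {f : MvPowerSeries σ K} (hf : MvPowerSeries.constantCoeff (σ := σ) (R := K) f = 0)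
    (G : PowerSeries K) (d : σ →₀ ℕ) {N : ℕ} (hN : dg d < N) :
    MvPowerSeries.coeff (R := K) d (psubst f G) =
      ∑ k ∈ range N, PowerSeries.coeff (R := K) k G * MvPowerSeries.coeff (R := K) d (f ^ k) := by
  rw [coeff_psubst]
  refine Finset.sum_subset ?_ ?_
  · exact Finset.range_subset_range.2 (by omega)
  · intro k hk hk'
    rw [mem_range] at hk hk'
    rw [coeff_pow_order hf k d (by omega), mul_zero]

end Aux

namespace Aux

open MvPowerSeries Finset

variable {σ : Type*}

lemma cauchy {M : Type*} [AddCommMonoid M] (D : ℕ) (F : ℕ → ℕ → M)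
    (hF : ∀ j l, D < j + l → F j l = 0) :
    ∑ m ∈ range (D+1), ∑ p ∈ antidiagonal m, F p.1 p.2
      = ∑ j ∈ range (D+1), ∑ l ∈ range (D+1), F j l := by
  have hdisj : (↑(range (D+1)) : Set ℕ).PairwiseDisjoint (fun m => antidiagonal m) := by
    intro m _ m' _ hne
    simp only [Finset.disjoint_left]
    intro p hp hp'
    rw [Finset.HasAntidiagonal.mem_antidiagonal] at hp hp'
    exact hne (hp ▸ hp')
  rw [← Finset.sum_biUnion hdisj, ← Finset.sum_product']
  refine Finset.sum_subset ?_ ?_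
  · intro p hp
    rw [Finset.mem_biUnion] at hp
    obtain ⟨m, hm, hpm⟩ := hp
    rw [mem_range] at hm
    rw [Finset.HasAntidiagonal.mem_antidiagonal] at hpm
    rw [Finset.mem_product, mem_range, mem_range]
    omega
  · intro p hp hnp
    refine hF p.1 p.2 ?_
    by_contra hle
    exact hnp (Finset.mem_biUnion.2 ⟨p.1 + p.2, mem_range.2 (by omega),
      Finset.HasAntidiagonal.mem_antidiagonal.2 rfl⟩)

variable {K : Type*} [CommRing K] [Algebra ℚ K]

lemma psubst_add (f : MvPowerSeries σ K) (G H : PowerSeries K) :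
    psubst f (G + H) = psubst f G + psubst f H := by
  ext d
  rw [map_add, coeff_psubst, coeff_psubst, coeff_psubst, ← Finset.sum_add_distrib]
  exact Finset.sum_congr rfl fun k _ => by rw [map_add, add_mul]

lemma psubst_smul (c : K) (f : MvPowerSeries σ K) (G : PowerSeries K) :
    psubst f (c • G) = c • psubst f G := by
  ext d
  rw [coeff_psubst, map_smul, coeff_psubst, Finset.smul_sum]
  exact Finset.sum_congr rfl fun k _ => by rw [map_smul, smul_mul_assoc]

lemma psubst_qsmul (c : ℚ) (f : MvPowerSeries σ K) (G : PowerSeries K) :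
    psubst f (c • G) = c • psubst f G := by
  rw [← algebraMap_smul K c G, psubst_smul, algebraMap_smul]

lemma psubst_zero (f : MvPowerSeries σ K) : psubst f (0 : PowerSeries K) = 0 := by
  ext d
  rw [coeff_psubst]
  simp

lemma psubst_sub (f : MvPowerSeries σ K) (G H : PowerSeries K) :
    psubst f (G - H) = psubst f G - psubst f H := by
  have h := psubst_add f (G - H) H
  rw [sub_add_cancel] at h
  rw [h]; ring

lemma psubst_one (f : MvPowerSeries σ K) : psubst f (1 : PowerSeries K) = 1 := by
  ext d
  rw [coeff_psubst]
  have : ∀ k ∈ range (dg d + 1), PowerSeries.coeff (R := K) k 1 * MvPowerSeries.coeff (R := K) d (f ^ k)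
      = if k = 0 then MvPowerSeries.coeff (R := K) d (f ^ k) else 0 := by
    intro k _
    rw [PowerSeries.coeff_one]
    split <;> simp
  rw [Finset.sum_congr rfl this, Finset.sum_ite_eq' (range (dg d + 1)) 0]
  simp

lemma psubst_X {f : MvPowerSeries σ K} (hf : MvPowerSeries.constantCoeff (σ := σ) (R := K) f = 0) :
    psubst f PowerSeries.X = f := by
  ext d
  rw [coeff_psubst_stable hf _ d (N := dg d + 2) (by omega)]
  have : ∀ k ∈ range (dg d + 2), PowerSeries.coeff (R := K) k PowerSeries.X
        * MvPowerSeries.coeff (R := K) d (f ^ k)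
      = if k = 1 then MvPowerSeries.coeff (R := K) d (f ^ k) else 0 := by
    intro k _
    rw [PowerSeries.coeff_X]
    split <;> simp
  rw [Finset.sum_congr rfl this, Finset.sum_ite_eq' (range (dg d + 2)) 1]
  simp [pow_one]

lemma constantCoeff_psubst (f : MvPowerSeries σ K) (G : PowerSeries K) :
    MvPowerSeries.coeff (R := K) (0 : σ →₀ ℕ) (psubst f G) = PowerSeries.coeff (R := K) 0 G := by
  rw [coeff_psubst]
  have h0 : dg (0 : σ →₀ ℕ) = 0 := Finsupp.sum_zero_index
  rw [h0]
  simp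

lemma psubst_mul {f : MvPowerSeries σ K} (hf : MvPowerSeries.constantCoeff (σ := σ) (R := K) f = 0)
    (G H : PowerSeries K) :
    psubst f (G * H) = psubst f G * psubst f H := by
  classical
  ext d
  set D := dg d with hD
  have key : ∀ j l : ℕ, D < j + l → (PowerSeries.coeff (R := K) j G * PowerSeries.coeff (R := K) l H)
      * MvPowerSeries.coeff (R := K) d (f ^ (j + l)) = 0 := by
    intro j l h
    rw [coeff_pow_order hf _ d (by omega), mul_zero]
  calc MvPowerSeries.coeff (R := K) d (psubst f (G * H))
      = ∑ m ∈ range (D+1), ∑ p ∈ antidiagonal m,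
          (PowerSeries.coeff (R := K) p.1 G * PowerSeries.coeff (R := K) p.2 H)
            * MvPowerSeries.coeff (R := K) d (f ^ (p.1 + p.2)) := by
        rw [coeff_psubst]
        refine Finset.sum_congr rfl fun m _ => ?_
        rw [PowerSeries.coeff_mul, Finset.sum_mul]
        refine Finset.sum_congr rfl fun p hp => ?_
        rw [Finset.HasAntidiagonal.mem_antidiagonal] at hp
        rw [← hp]
    _ = ∑ j ∈ range (D+1), ∑ l ∈ range (D+1),
          (PowerSeries.coeff (R := K) j G * PowerSeries.coeff (R := K) l H)
            * MvPowerSeries.coeff (R := K) d (f ^ (j + l)) := cauchy D _ key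
    _ = MvPowerSeries.coeff (R := K) d (psubst f G * psubst f H) := by
        have : ∀ p ∈ antidiagonal d,
            MvPowerSeries.coeff (R := K) p.1 (psubst f G) * MvPowerSeries.coeff (R := K) p.2 (psubst f H)
            = ∑ j ∈ range (D+1), ∑ l ∈ range (D+1),
               (PowerSeries.coeff (R := K) j G * PowerSeries.coeff (R := K) l H)
                 * (MvPowerSeries.coeff (R := K) p.1 (f ^ j) * MvPowerSeries.coeff (R := K) p.2 (f ^ l)) := by
          intro p hp
          rw [Finset.HasAntidiagonal.mem_antidiagonal] at hp
          have hdg : dg p.1 + dg p.2 = D := by rw [← dg_add, hp]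
          rw [coeff_psubst_stable hf G p.1 (N := D + 1) (by omega),
              coeff_psubst_stable hf H p.2 (N := D + 1) (by omega),
              Finset.sum_mul_sum]
          refine Finset.sum_congr rfl fun j _ => Finset.sum_congr rfl fun l _ => by ring
        have h2 : MvPowerSeries.coeff (R := K) d (psubst f G * psubst f H)
            = ∑ j ∈ range (D+1), ∑ l ∈ range (D+1),
               (PowerSeries.coeff (R := K) j G * PowerSeries.coeff (R := K) l H)
                 * MvPowerSeries.coeff (R := K) d (f ^ (j + l)) := by
          rw [MvPowerSeries.coeff_mul, Finset.sum_congr rfl this, Finset.sum_comm]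
          refine Finset.sum_congr rfl fun j _ => ?_
          rw [Finset.sum_comm]
          refine Finset.sum_congr rfl fun l _ => ?_
          rw [← Finset.mul_sum, ← MvPowerSeries.coeff_mul, ← pow_add]
        rw [h2]

lemma psubst_pow {f : MvPowerSeries σ K} (hf : MvPowerSeries.constantCoeff (σ := σ) (R := K) f = 0)
    (G : PowerSeries K) (k : ℕ) :
    psubst f (G ^ k) = psubst f G ^ k := by
  induction k with
  | zero => simpa using psubst_one f
  | succ k ih => rw [pow_succ, psubst_mul hf, ih, pow_succ]

end Aux

namespace Aux

open MvPowerSeries Finset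

variable {σ : Type*} {K : Type*} [CommRing K] [Algebra ℚ K]

lemma ps_coeff_eq (n : ℕ) (A : PowerSeries K) :
    PowerSeries.coeff (R := K) n A = MvPowerSeries.coeff (R := K) (Finsupp.single () n) A := rfl

lemma dg_single (n : ℕ) : dg (Finsupp.single () n) = n := Finsupp.sum_single_index rfl

lemma unit_cancel {x : K} {q : ℚ} (hq : q ≠ 0) (h : x * algebraMap ℚ K q = 0) : x = 0 := by
  have h2 : x * algebraMap ℚ K q * algebraMap ℚ K q⁻¹ = 0 := by rw [h, zero_mul]
  rwa [mul_assoc, ← map_mul, mul_inv_cancel₀ hq, map_one, mul_one] at h2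

lemma coeff_psubst_stable_one {H : MvPowerSeries Unit K} (hH : MvPowerSeries.constantCoeff (σ := Unit) (R := K) H = 0)
    (G : PowerSeries K) {m N : ℕ} (h : m < N) :
    PowerSeries.coeff (R := K) m (psubst H G) =
      ∑ k ∈ range N, PowerSeries.coeff (R := K) k G * PowerSeries.coeff (R := K) m (H ^ k) := by
  rw [ps_coeff_eq, coeff_psubst_stable hH G _ (by rw [dg_single]; exact h)]
  rfl

lemma psubst_comp {f : MvPowerSeries σ K} (hf : MvPowerSeries.constantCoeff (σ := σ) (R := K) f = 0)
    {H : MvPowerSeries Unit K} (hH : MvPowerSeries.constantCoeff (σ := Unit) (R := K) H = 0) (G : PowerSeries K) :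
    psubst f (psubst H G) = psubst (psubst f H) G := by
  ext d
  set D := dg d with hD
  have step1 : ∀ m ∈ range (D + 1),
      PowerSeries.coeff (R := K) m (psubst H G) * MvPowerSeries.coeff (R := K) d (f ^ m)
      = ∑ k ∈ range (D + 1), PowerSeries.coeff (R := K) k G *
          (PowerSeries.coeff (R := K) m (H ^ k) * MvPowerSeries.coeff (R := K) d (f ^ m)) := by
    intro m hm
    rw [mem_range] at hm
    rw [coeff_psubst_stable_one hH G (N := D + 1) (by omega), Finset.sum_mul]
    exact Finset.sum_congr rfl fun k _ => by ring
  calc MvPowerSeries.coeff (R := K) d (psubst f (psubst H G))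
      = ∑ m ∈ range (D+1), PowerSeries.coeff (R := K) m (psubst H G)
          * MvPowerSeries.coeff (R := K) d (f ^ m) := coeff_psubst _ _ _
    _ = ∑ m ∈ range (D+1), ∑ k ∈ range (D+1), PowerSeries.coeff (R := K) k G *
          (PowerSeries.coeff (R := K) m (H ^ k) * MvPowerSeries.coeff (R := K) d (f ^ m)) :=
        Finset.sum_congr rfl step1
    _ = ∑ k ∈ range (D+1), PowerSeries.coeff (R := K) k G *
          ∑ m ∈ range (D+1), PowerSeries.coeff (R := K) m (H ^ k)
            * MvPowerSeries.coeff (R := K) d (f ^ m) := by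
        rw [Finset.sum_comm]
        exact Finset.sum_congr rfl fun k _ => by rw [Finset.mul_sum]
    _ = ∑ k ∈ range (D+1), PowerSeries.coeff (R := K) k G
          * MvPowerSeries.coeff (R := K) d ((psubst f H) ^ k) := by
        refine Finset.sum_congr rfl fun k _ => ?_
        rw [← psubst_pow hf, coeff_psubst]
    _ = MvPowerSeries.coeff (R := K) d (psubst (psubst f H) G) := (coeff_psubst _ _ _).symm

lemma constantCoeff_logOneSub : PowerSeries.constantCoeff (R := K) logOneSub = 0 := by
  have : PowerSeries.coeff (R := K) 0 (logOneSub (K := K)) = 0 := by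
    rw [logOneSub, PowerSeries.coeff_mk]; simp
  rwa [PowerSeries.coeff_zero_eq_constantCoeff] at this

lemma coeff_logOneSub {n : ℕ} (hn : n ≠ 0) :
    PowerSeries.coeff (R := K) n (logOneSub (K := K)) = algebraMap ℚ K (-(1 / (n : ℚ))) := by
  rw [logOneSub, PowerSeries.coeff_mk, if_neg hn]

open PowerSeries in
lemma deriv_logOneSub_coeff (n : ℕ) :
    PowerSeries.coeff (R := K) n (d⁄dX K (logOneSub (K := K))) = -1 := by
  rw [PowerSeries.coeff_derivative, coeff_logOneSub (Nat.succ_ne_zero n)]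
  have : ((n : K) + 1) = algebraMap ℚ K ((n : ℚ) + 1) := by
    rw [map_add, map_one, map_natCast]
  rw [this, ← map_mul]
  have hq : (-(1 / ((n : ℚ) + 1))) * ((n : ℚ) + 1) = -1 := by
    have : ((n : ℚ) + 1) ≠ 0 := by positivity
    field_simp
  rw [show ((n : ℚ) + 1) = (((n + 1 : ℕ) : ℚ)) by push_cast; ring] at hq ⊢
  rw [hq, map_neg, map_one]

open PowerSeries in
lemma one_sub_X_mul_deriv_logOneSub :
    (1 - PowerSeries.X) * d⁄dX K (logOneSub (K := K)) = -1 := by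
  ext n
  rw [sub_mul, one_mul, map_sub]
  cases n with
  | zero =>
    rw [PowerSeries.coeff_zero_X_mul, deriv_logOneSub_coeff]
    simp
  | succ n =>
    rw [PowerSeries.coeff_succ_X_mul, deriv_logOneSub_coeff, deriv_logOneSub_coeff]
    simp [PowerSeries.coeff_one]

open PowerSeries in
lemma deriv_exp : d⁄dX K (PowerSeries.exp K) = PowerSeries.exp K := by
  ext n
  rw [PowerSeries.coeff_derivative, PowerSeries.coeff_exp, PowerSeries.coeff_exp]
  have : ((n : K) + 1) = algebraMap ℚ K ((n : ℚ) + 1) := by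
    rw [map_add, map_one, map_natCast]
  rw [this, ← map_mul]
  congr 1
  rw [Nat.factorial_succ]
  have h1 : ((Nat.factorial n : ℚ)) ≠ 0 := Nat.cast_ne_zero.mpr (Nat.factorial_ne_zero n)
  have h2 : ((n : ℚ) + 1) ≠ 0 := by positivity
  push_cast
  field_simp

open PowerSeries in
lemma psubst_deriv {H : MvPowerSeries Unit K} (hH : MvPowerSeries.constantCoeff (σ := Unit) (R := K) H = 0)
    (G : PowerSeries K) :
    d⁄dX K (psubst H G) = psubst H (d⁄dX K G) * d⁄dX K H := by
  ext n
  have hstep : ∀ k : ℕ,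
      PowerSeries.coeff (R := K) n (d⁄dX K ((H : PowerSeries K) ^ (k+1)))
        = (k+1) • PowerSeries.coeff (R := K) n ((H : PowerSeries K) ^ k * d⁄dX K (H : PowerSeries K)) := by
    intro k
    rw [Derivation.leibniz_pow]
    rw [map_nsmul]
    congr 1
  calc PowerSeries.coeff (R := K) n (d⁄dX K (psubst H G))
      = PowerSeries.coeff (R := K) (n+1) (psubst H G) * ((n:K)+1) := by
        rw [PowerSeries.coeff_derivative]
    _ = ∑ k ∈ range (n+2), PowerSeries.coeff (R := K) k G
          * (PowerSeries.coeff (R := K) (n+1) (H ^ k) * ((n:K)+1)) := by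
        rw [coeff_psubst_stable_one hH G (N := n+2) (by omega), Finset.sum_mul]
        exact Finset.sum_congr rfl fun k _ => by ring
    _ = ∑ k ∈ range (n+2), PowerSeries.coeff (R := K) k G
          * PowerSeries.coeff (R := K) n (d⁄dX K ((H : PowerSeries K) ^ k)) := by
        refine Finset.sum_congr rfl fun k _ => ?_
        rw [PowerSeries.coeff_derivative]
    _ = ∑ k ∈ range (n+1), PowerSeries.coeff (R := K) (k+1) G
          * ((k+1) • PowerSeries.coeff (R := K) n ((H : PowerSeries K) ^ k * d⁄dX K (H : PowerSeries K))) := by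
        rw [Finset.sum_range_succ']
        simp only [hstep]
        simp
    _ = ∑ k ∈ range (n+1), (PowerSeries.coeff (R := K) (k+1) G * ((k:K)+1))
          * PowerSeries.coeff (R := K) n ((H : PowerSeries K) ^ k * d⁄dX K (H : PowerSeries K)) := by
        refine Finset.sum_congr rfl fun k _ => ?_
        rw [nsmul_eq_mul]
        push_cast; ring
    _ = PowerSeries.coeff (R := K) n (psubst H (d⁄dX K G) * d⁄dX K H) := by
        rw [PowerSeries.coeff_mul]
        have : ∀ p ∈ antidiagonal n,
            PowerSeries.coeff (R := K) p.1 (psubst H (d⁄dX K G)) * PowerSeries.coeff (R := K) p.2 (d⁄dX K H)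
            = ∑ k ∈ range (n+1), (PowerSeries.coeff (R := K) (k+1) G * ((k:K)+1))
                * (PowerSeries.coeff (R := K) p.1 (H ^ k) * PowerSeries.coeff (R := K) p.2 (d⁄dX K H)) := by
          intro p hp
          rw [Finset.HasAntidiagonal.mem_antidiagonal] at hp
          rw [coeff_psubst_stable_one hH _ (N := n+1) (by omega), Finset.sum_mul]
          refine Finset.sum_congr rfl fun k _ => ?_
          rw [PowerSeries.coeff_derivative]
          push_cast; ring
        rw [Finset.sum_congr rfl this, Finset.sum_comm]
        refine Finset.sum_congr rfl fun k _ => ?_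
        rw [← Finset.mul_sum, PowerSeries.coeff_mul]

end Aux

namespace Aux

open MvPowerSeries Finset

variable {σ : Type*} {K : Type*} [CommRing K] [Algebra ℚ K]

lemma dg_eq_zero {e : σ →₀ ℕ} (h : dg e = 0) : e = 0 := by
  ext s
  by_contra hs
  have hpos : 0 < e s := Nat.pos_of_ne_zero hs
  have hmem : s ∈ e.support := Finsupp.mem_support_iff.2 hs
  have : e s ≤ dg e := Finset.single_le_sum (f := fun s => e s) (fun _ _ => Nat.zero_le _) hmem
  omega

open PowerSeries in
lemma exp_logOneSub :
    psubst (σ := Unit) (logOneSub (K := K)) (PowerSeries.exp K) = 1 - PowerSeries.X := by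
  have hL0 : MvPowerSeries.constantCoeff (σ := Unit) (R := K) (logOneSub (K := K)) = 0 := constantCoeff_logOneSub
  set A := psubst (σ := Unit) (logOneSub (K := K)) (PowerSeries.exp K) with hA
  set Z := A - (1 - PowerSeries.X) with hZ
  have hz0 : PowerSeries.coeff (R := K) 0 Z = 0 := by
    rw [hZ, map_sub, map_sub]
    have hA0 : PowerSeries.coeff (R := K) 0 A = 1 := by
      rw [hA, ps_coeff_eq, Finsupp.single_zero, constantCoeff_psubst,
        PowerSeries.coeff_zero_eq_constantCoeff]
      exact PowerSeries.constantCoeff_exp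
    rw [hA0]
    simp [PowerSeries.coeff_one]
  have hdA : d⁄dX K A = A * d⁄dX K (logOneSub (K := K)) := by
    rw [hA, psubst_deriv hL0, deriv_exp]
  have hrel : (1 - PowerSeries.X) * d⁄dX K Z = -Z := by
    have hdz : d⁄dX K Z = A * d⁄dX K (logOneSub (K := K)) + 1 := by
      rw [hZ, map_sub, hdA, map_sub, Derivation.map_one_eq_zero, PowerSeries.derivative_X]
      ring
    calc (1 - PowerSeries.X) * d⁄dX K Z
        = A * ((1 - PowerSeries.X) * d⁄dX K (logOneSub (K := K))) + (1 - PowerSeries.X) := by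
          rw [hdz]; ring
      _ = -Z := by rw [one_sub_X_mul_deriv_logOneSub, hZ]; ring
  have key : ∀ n, PowerSeries.coeff (R := K) n Z = 0 := by
    intro n
    induction n with
    | zero => exact hz0
    | succ n ih =>
      have h := congrArg (PowerSeries.coeff (R := K) n) hrel
      rw [sub_mul, one_mul, map_sub, map_neg, ih, neg_zero] at h
      have hx : PowerSeries.coeff (R := K) n (PowerSeries.X * d⁄dX K Z) = 0 := by
        cases n with
        | zero => exact PowerSeries.coeff_zero_X_mul _
        | succ m =>
          rw [PowerSeries.coeff_succ_X_mul, PowerSeries.coeff_derivative, ih, zero_mul]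
      rw [hx, sub_zero, PowerSeries.coeff_derivative] at h
      have hcast : ((n : K) + 1) = algebraMap ℚ K ((n : ℚ) + 1) := by
        rw [map_add, map_one, map_natCast]
      rw [hcast] at h
      exact unit_cancel (by positivity) h
  have hZ0 : Z = 0 := by
    ext n
    rw [key n, map_zero]
  rw [hZ] at hZ0
  exact sub_eq_zero.mp hZ0

lemma psubst_exp_zero : psubst (0 : MvPowerSeries σ K) (PowerSeries.exp K) = 1 := by
  ext d
  rw [coeff_psubst]
  have h : ∀ k ∈ range (dg d + 1),
      PowerSeries.coeff (R := K) k (PowerSeries.exp K)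
          * MvPowerSeries.coeff (R := K) d ((0 : MvPowerSeries σ K) ^ k)
      = if k = 0 then MvPowerSeries.coeff (R := K) d 1 else 0 := by
    intro k _
    rcases k with _ | k
    · rw [if_pos rfl, pow_zero, PowerSeries.coeff_exp]
      simp
    · rw [if_neg (Nat.succ_ne_zero k), zero_pow (Nat.succ_ne_zero k), map_zero, mul_zero]
  rw [Finset.sum_congr rfl h, Finset.sum_ite_eq' (range (dg d + 1)) 0]
  simp

lemma psubst_exp_add {u v : MvPowerSeries σ K} (hu : MvPowerSeries.constantCoeff (σ := σ) (R := K) u = 0)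
    (hv : MvPowerSeries.constantCoeff (σ := σ) (R := K) v = 0) :
    psubst (u + v) (PowerSeries.exp K)
      = psubst u (PowerSeries.exp K) * psubst v (PowerSeries.exp K) := by
  classical
  ext d
  set D := dg d with hD
  have key : ∀ j l : ℕ, D < j + l →
      (algebraMap ℚ K (1 / (Nat.factorial j : ℚ)) * algebraMap ℚ K (1 / (Nat.factorial l : ℚ)))
        * MvPowerSeries.coeff (R := K) d (u ^ j * v ^ l) = 0 := by
    intro j l h
    rw [coeff_mul_order (coeff_pow_order hu j) (coeff_pow_order hv l) h, mul_zero]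
  calc MvPowerSeries.coeff (R := K) d (psubst (u + v) (PowerSeries.exp K))
      = ∑ m ∈ range (D+1), algebraMap ℚ K (1 / (Nat.factorial m : ℚ))
          * MvPowerSeries.coeff (R := K) d ((u + v) ^ m) := by
        rw [coeff_psubst]
        exact Finset.sum_congr rfl fun m _ => by rw [PowerSeries.coeff_exp]
    _ = ∑ m ∈ range (D+1), ∑ p ∈ antidiagonal m,
          (algebraMap ℚ K (1 / (Nat.factorial p.1 : ℚ))
            * algebraMap ℚ K (1 / (Nat.factorial p.2 : ℚ)))
            * MvPowerSeries.coeff (R := K) d (u ^ p.1 * v ^ p.2) := by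
        refine Finset.sum_congr rfl fun m _ => ?_
        rw [add_pow, map_sum, Finset.mul_sum, Finset.Nat.sum_antidiagonal_eq_sum_range_succ_mk]
        refine Finset.sum_congr rfl fun j hj => ?_
        rw [mem_range] at hj
        have hjm : j ≤ m := by omega
        have hcoeff : MvPowerSeries.coeff (R := K) d
              (u ^ j * v ^ (m - j) * ((m.choose j : ℕ) : MvPowerSeries σ K))
            = ((m.choose j : ℕ) : K) * MvPowerSeries.coeff (R := K) d (u ^ j * v ^ (m - j)) := by
          rw [mul_comm (u ^ j * v ^ (m - j)) _, ← nsmul_eq_mul, map_nsmul, nsmul_eq_mul]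
        rw [hcoeff, ← mul_assoc]
        congr 1
        rw [show ((m.choose j : ℕ) : K) = algebraMap ℚ K ((m.choose j : ℕ) : ℚ) from
          (map_natCast (algebraMap ℚ K) _).symm, ← map_mul]
        congr 1
        rw [Nat.cast_choose ℚ hjm]
        have h1 : ((Nat.factorial j : ℚ)) ≠ 0 := Nat.cast_ne_zero.mpr (Nat.factorial_ne_zero j)
        have h2 : ((Nat.factorial (m - j) : ℚ)) ≠ 0 := Nat.cast_ne_zero.mpr (Nat.factorial_ne_zero _)
        have h3 : ((Nat.factorial m : ℚ)) ≠ 0 := Nat.cast_ne_zero.mpr (Nat.factorial_ne_zero m)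
        field_simp
        rw [← map_mul]
        congr 1
        rw [div_mul_div_comm, one_mul]
    _ = ∑ j ∈ range (D+1), ∑ l ∈ range (D+1),
          (algebraMap ℚ K (1 / (Nat.factorial j : ℚ)) * algebraMap ℚ K (1 / (Nat.factorial l : ℚ)))
            * MvPowerSeries.coeff (R := K) d (u ^ j * v ^ l) := cauchy D _ key
    _ = MvPowerSeries.coeff (R := K) d (psubst u (PowerSeries.exp K) * psubst v (PowerSeries.exp K)) := by
        have hstep : ∀ p ∈ antidiagonal d,
            MvPowerSeries.coeff (R := K) p.1 (psubst u (PowerSeries.exp K))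
              * MvPowerSeries.coeff (R := K) p.2 (psubst v (PowerSeries.exp K))
            = ∑ j ∈ range (D+1), ∑ l ∈ range (D+1),
               (algebraMap ℚ K (1 / (Nat.factorial j : ℚ))
                 * algebraMap ℚ K (1 / (Nat.factorial l : ℚ)))
                 * (MvPowerSeries.coeff (R := K) p.1 (u ^ j) * MvPowerSeries.coeff (R := K) p.2 (v ^ l)) := by
          intro p hp
          rw [Finset.HasAntidiagonal.mem_antidiagonal] at hp
          have hdg : dg p.1 + dg p.2 = D := by rw [← dg_add, hp]
          rw [coeff_psubst_stable hu _ p.1 (N := D + 1) (by omega),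
              coeff_psubst_stable hv _ p.2 (N := D + 1) (by omega),
              Finset.sum_mul_sum]
          refine Finset.sum_congr rfl fun j _ => Finset.sum_congr rfl fun l _ => ?_
          rw [PowerSeries.coeff_exp, PowerSeries.coeff_exp]
          ring
        have h2 : MvPowerSeries.coeff (R := K) d
              (psubst u (PowerSeries.exp K) * psubst v (PowerSeries.exp K))
            = ∑ j ∈ range (D+1), ∑ l ∈ range (D+1),
               (algebraMap ℚ K (1 / (Nat.factorial j : ℚ))
                 * algebraMap ℚ K (1 / (Nat.factorial l : ℚ)))
                 * MvPowerSeries.coeff (R := K) d (u ^ j * v ^ l) := by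
          rw [MvPowerSeries.coeff_mul, Finset.sum_congr rfl hstep, Finset.sum_comm]
          refine Finset.sum_congr rfl fun j _ => ?_
          rw [Finset.sum_comm]
          refine Finset.sum_congr rfl fun l _ => ?_
          rw [← Finset.mul_sum, ← MvPowerSeries.coeff_mul]
        rw [h2]

lemma psubst_exp_prod {ι : Type*} [DecidableEq ι] (I : Finset ι) (g : ι → MvPowerSeries σ K)
    (hg : ∀ i ∈ I, MvPowerSeries.constantCoeff (σ := σ) (R := K) (g i) = 0) :
    psubst (∑ i ∈ I, g i) (PowerSeries.exp K) = ∏ i ∈ I, psubst (g i) (PowerSeries.exp K) := by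
  induction I using Finset.induction_on with
  | empty => rw [Finset.sum_empty, Finset.prod_empty, psubst_exp_zero]
  | @insert a s ha ih =>
    have hsum0 : MvPowerSeries.constantCoeff (σ := σ) (R := K) (∑ i ∈ s, g i) = 0 := by
      rw [map_sum]
      exact Finset.sum_eq_zero fun i hi => hg i (Finset.mem_insert_of_mem hi)
    rw [Finset.sum_insert ha, Finset.prod_insert ha,
      psubst_exp_add (hg a (Finset.mem_insert_self a s)) hsum0,
      ih fun i hi => hg i (Finset.mem_insert_of_mem hi)]

lemma pow_coeff_congr {u v : MvPowerSeries σ K} (hu : MvPowerSeries.constantCoeff (σ := σ) (R := K) u = 0)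
    (hv : MvPowerSeries.constantCoeff (σ := σ) (R := K) v = 0) {D : ℕ}
    (hag : ∀ e : σ →₀ ℕ, dg e < D → MvPowerSeries.coeff (R := K) e u = MvPowerSeries.coeff (R := K) e v) :
    ∀ m : ℕ, ∀ e : σ →₀ ℕ, dg e ≤ D →
      MvPowerSeries.coeff (R := K) e (u * u ^ (m+1)) = MvPowerSeries.coeff (R := K) e (v * v ^ (m+1)) := by
  classical
  intro m
  induction m with
  | zero =>
    intro e he
    rw [MvPowerSeries.coeff_mul, MvPowerSeries.coeff_mul]
    refine Finset.sum_congr rfl fun p hp => ?_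
    rw [Finset.HasAntidiagonal.mem_antidiagonal] at hp
    by_cases h1 : p.1 = 0
    · rw [h1, coeff_zero_eq_constantCoeff_apply, coeff_zero_eq_constantCoeff_apply,
        hu, hv, zero_mul, zero_mul]
    by_cases h2 : p.2 = 0
    · rw [h2, pow_one, pow_one, coeff_zero_eq_constantCoeff_apply,
        coeff_zero_eq_constantCoeff_apply, hu, hv, mul_zero, mul_zero]
    have hds : dg p.1 + dg p.2 = dg e := by rw [← dg_add, hp]
    have hp1 : 0 < dg p.1 := Nat.pos_of_ne_zero fun hc => h1 (dg_eq_zero hc)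
    have hp2 : 0 < dg p.2 := Nat.pos_of_ne_zero fun hc => h2 (dg_eq_zero hc)
    rw [pow_one, pow_one, hag p.1 (by omega), hag p.2 (by omega)]
  | succ m ih =>
    intro e he
    rw [pow_succ', MvPowerSeries.coeff_mul, pow_succ' (a := v), MvPowerSeries.coeff_mul]
    refine Finset.sum_congr rfl fun p hp => ?_
    rw [Finset.HasAntidiagonal.mem_antidiagonal] at hp
    by_cases h1 : p.1 = 0
    · rw [h1, coeff_zero_eq_constantCoeff_apply, coeff_zero_eq_constantCoeff_apply,
        hu, hv, zero_mul, zero_mul]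
    by_cases h2 : p.2 = 0
    · have hz : ∀ w : MvPowerSeries σ K, MvPowerSeries.constantCoeff (σ := σ) (R := K) w = 0 →
          MvPowerSeries.coeff (R := K) (0 : σ →₀ ℕ) (w * w ^ (m+1)) = 0 := by
        intro w hw
        rw [coeff_zero_eq_constantCoeff_apply, map_mul, hw, zero_mul]
      rw [h2, hz u hu, hz v hv, mul_zero, mul_zero]
    have hds : dg p.1 + dg p.2 = dg e := by rw [← dg_add, hp]
    have hp1 : 0 < dg p.1 := Nat.pos_of_ne_zero fun hc => h1 (dg_eq_zero hc)
    have hp2 : 0 < dg p.2 := Nat.pos_of_ne_zero fun hc => h2 (dg_eq_zero hc)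
    rw [hag p.1 (by omega), ih p.2 (by omega)]

lemma psubst_exp_inj {u v : MvPowerSeries σ K} (hu : MvPowerSeries.constantCoeff (σ := σ) (R := K) u = 0)
    (hv : MvPowerSeries.constantCoeff (σ := σ) (R := K) v = 0)
    (h : psubst u (PowerSeries.exp K) = psubst v (PowerSeries.exp K)) : u = v := by
  classical
  have main : ∀ D : ℕ, ∀ d : σ →₀ ℕ, dg d = D →
      MvPowerSeries.coeff (R := K) d u = MvPowerSeries.coeff (R := K) d v := by
    intro D
    induction D using Nat.strong_induction_on with
    | _ D ih =>
      intro d hd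
      rcases Nat.eq_zero_or_pos D with hD0 | hDpos
      · have hd0 : d = 0 := dg_eq_zero (by omega)
        rw [hd0, coeff_zero_eq_constantCoeff_apply, coeff_zero_eq_constantCoeff_apply, hu, hv]
      have hco := congrArg (MvPowerSeries.coeff (R := K) d) h
      rw [coeff_psubst, coeff_psubst] at hco
      have h1mem : (1 : ℕ) ∈ range (dg d + 1) := by rw [mem_range]; omega
      rw [← Finset.add_sum_erase _ _ h1mem, ← Finset.add_sum_erase _ _ h1mem] at hco
      have herase : ∑ k ∈ (range (dg d + 1)).erase 1,
            PowerSeries.coeff (R := K) k (PowerSeries.exp K) * MvPowerSeries.coeff (R := K) d (u ^ k)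
          = ∑ k ∈ (range (dg d + 1)).erase 1,
            PowerSeries.coeff (R := K) k (PowerSeries.exp K) * MvPowerSeries.coeff (R := K) d (v ^ k) := by
        refine Finset.sum_congr rfl fun k hk => ?_
        have hk1 : k ≠ 1 := (Finset.mem_erase.1 hk).1
        match k, hk1 with
        | 0, _ => rw [pow_zero, pow_zero]
        | (m+2), _ =>
          congr 1
          have hag : ∀ e : σ →₀ ℕ, dg e < D →
              MvPowerSeries.coeff (R := K) e u = MvPowerSeries.coeff (R := K) e v :=
            fun e he => ih (dg e) he e rfl
          have hpc := pow_coeff_congr hu hv hag m d (le_of_eq hd)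
          rw [← pow_succ', ← pow_succ'] at hpc
          exact hpc
      rw [herase] at hco
      have hone := add_right_cancel hco
      rw [pow_one, pow_one, PowerSeries.coeff_exp] at hone
      simpa using hone
  ext d
  exact main (dg d) d rfl

lemma constantCoeff_psubst' (f : MvPowerSeries σ K) (G : PowerSeries K) :
    MvPowerSeries.constantCoeff (σ := σ) (R := K) (psubst f G) = PowerSeries.coeff (R := K) 0 G := by
  rw [← coeff_zero_eq_constantCoeff_apply, constantCoeff_psubst]

lemma log_prod [DecidableEq σ] (I : Finset σ) :
    psubst (1 - ∏ i ∈ I, (1 - MvPowerSeries.X i)) (logOneSub (K := K))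
      = ∑ i ∈ I, psubst (MvPowerSeries.X i) (logOneSub (K := K)) := by
  have hL0 : MvPowerSeries.constantCoeff (σ := Unit) (R := K) (logOneSub (K := K)) = 0 := constantCoeff_logOneSub
  have hL0' : PowerSeries.coeff (R := K) 0 (logOneSub (K := K)) = 0 := by
    rw [PowerSeries.coeff_zero_eq_constantCoeff]; exact constantCoeff_logOneSub
  have hfI : MvPowerSeries.constantCoeff (σ := σ) (R := K) (1 - ∏ i ∈ I, (1 - MvPowerSeries.X i)) = 0 := by
    rw [map_sub, map_one, map_prod]
    have h1 : ∀ i ∈ I, MvPowerSeries.constantCoeff (σ := σ) (R := K) (1 - MvPowerSeries.X i) = 1 := by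
      intro i _
      rw [map_sub, map_one, constantCoeff_X, sub_zero]
    rw [Finset.prod_congr rfl h1, Finset.prod_const_one, sub_self]
  have hXi : ∀ i : σ, MvPowerSeries.constantCoeff (σ := σ) (R := K) (MvPowerSeries.X i : MvPowerSeries σ K) = 0 :=
    fun i => constantCoeff_X i
  refine psubst_exp_inj ?_ ?_ ?_
  · rw [constantCoeff_psubst', hL0']
  · rw [map_sum]
    exact Finset.sum_eq_zero fun i _ => by rw [constantCoeff_psubst', hL0']
  · rw [← psubst_comp hfI hL0, exp_logOneSub, psubst_sub, psubst_one, psubst_X hfI,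
      sub_sub_cancel]
    rw [psubst_exp_prod I _ (fun i _ => by rw [constantCoeff_psubst', hL0'])]
    refine (Finset.prod_congr rfl fun i _ => ?_).symm
    rw [← psubst_comp (hXi i) hL0, exp_logOneSub, psubst_sub, psubst_one, psubst_X (hXi i)]

end Aux

namespace Aux

open MvPowerSeries Finset

variable {σ : Type*} {K : Type*} [CommRing K] [Algebra ℚ K]

lemma dg_single' (i : σ) (c : ℕ) : dg (Finsupp.single i c) = c :=
  Finsupp.sum_single_index rfl

lemma ps_coeff_pow_order {H : PowerSeries K} (hH : PowerSeries.constantCoeff (R := K) H = 0)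
    {k s : ℕ} (h : s < k) : PowerSeries.coeff (R := K) s (H ^ k) = 0 := by
  rw [ps_coeff_eq]
  exact coeff_pow_order hH k _ (by rw [dg_single]; exact h)

lemma ps_coeff_pow_bottom {H : PowerSeries K} (hH : PowerSeries.constantCoeff (R := K) H = 0)
    (k : ℕ) : PowerSeries.coeff (R := K) k (H ^ k) = (PowerSeries.coeff (R := K) 1 H) ^ k := by
  induction k with
  | zero => simp
  | succ k ih =>
    rw [pow_succ', PowerSeries.coeff_mul, Finset.sum_eq_single (1, k)]
    · rw [ih, pow_succ']
    · intro p hp hne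
      rw [Finset.HasAntidiagonal.mem_antidiagonal] at hp
      rcases Nat.eq_zero_or_pos p.1 with h0 | hpos
      · rw [h0, PowerSeries.coeff_zero_eq_constantCoeff_apply, hH, zero_mul]
      · have hp1 : p.1 ≠ 1 := by
          intro h1
          apply hne
          have : p.2 = k := by omega
          rw [← h1, ← this]
        have hp2 : p.2 < k := by omega
        rw [ps_coeff_pow_order hH hp2, mul_zero]
    · intro hmem
      exact absurd (Finset.HasAntidiagonal.mem_antidiagonal.mpr (by omega)) hmem

lemma ps_coeff_qsmul (q : ℚ) (A : PowerSeries K) (s : ℕ) :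
    PowerSeries.coeff (R := K) s (q • A) = algebraMap ℚ K q * PowerSeries.coeff (R := K) s A := by
  rw [← algebraMap_smul K q A, map_smul, smul_eq_mul]

lemma coeff_lg_lt {r s : ℕ} (h : s < r) : PowerSeries.coeff (R := K) s (lg (K := K) r) = 0 := by
  rw [lg, ps_coeff_qsmul, ps_coeff_pow_order constantCoeff_logOneSub h, mul_zero]

lemma coeff_lg_self (r : ℕ) : PowerSeries.coeff (R := K) r (lg (K := K) r)
    = algebraMap ℚ K (((r.factorial : ℚ))⁻¹ * (-1) ^ r) := by
  rw [lg, ps_coeff_qsmul, ps_coeff_pow_bottom constantCoeff_logOneSub]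
  have h1 : PowerSeries.coeff (R := K) 1 (logOneSub (K := K)) = algebraMap ℚ K (-1) := by
    rw [coeff_logOneSub one_ne_zero]
    norm_num
  rw [h1, ← map_pow, ← map_mul]

lemma exists_expansion (G : PowerSeries K) (n : ℕ) : ∃ b : ℕ → K,
    ∀ s, s < n → PowerSeries.coeff (R := K) s (∑ r ∈ range n, b r • lg (K := K) r)
      = PowerSeries.coeff (R := K) s G := by
  induction n with
  | zero => exact ⟨fun _ => 0, fun s hs => absurd hs (by omega)⟩
  | succ n ih =>
    obtain ⟨b, hb⟩ := ih
    set prev := ∑ r ∈ range n, b r • lg (K := K) r with hprev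
    set c := (PowerSeries.coeff (R := K) n G - PowerSeries.coeff (R := K) n prev)
      * algebraMap ℚ K ((n.factorial : ℚ) * (-1) ^ n) with hc
    refine ⟨Function.update b n c, ?_⟩
    have hsum : ∑ r ∈ range (n+1), (Function.update b n c) r • lg (K := K) r
        = prev + c • lg (K := K) n := by
      rw [Finset.sum_range_succ, Function.update_self]
      congr 1
      refine Finset.sum_congr rfl fun r hr => ?_
      rw [mem_range] at hr
      rw [Function.update_of_ne (by omega)]
    intro s hs
    rw [hsum, map_add, map_smul, smul_eq_mul]
    rcases Nat.lt_or_ge s n with h | h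
    · rw [coeff_lg_lt h, mul_zero, add_zero, hb s h]
    · have hsn : s = n := by omega
      subst hsn
      rw [coeff_lg_self]
      have hfact : ((s.factorial : ℚ)) ≠ 0 := Nat.cast_ne_zero.mpr (Nat.factorial_ne_zero s)
      have hqone : ((s.factorial : ℚ) * (-1) ^ s) * (((s.factorial : ℚ))⁻¹ * (-1) ^ s) = 1 := by
        have heq : ((s.factorial : ℚ) * (-1) ^ s) * (((s.factorial : ℚ))⁻¹ * (-1) ^ s)
            = ((s.factorial : ℚ) * ((s.factorial : ℚ))⁻¹) * ((-1) ^ s * (-1) ^ s) := by ring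
        rw [heq, mul_inv_cancel₀ hfact, ← pow_add, Even.neg_one_pow ⟨s, rfl⟩, one_mul]
      have hcval : c * algebraMap ℚ K (((s.factorial : ℚ))⁻¹ * (-1) ^ s)
          = PowerSeries.coeff (R := K) s G - PowerSeries.coeff (R := K) s prev := by
        rw [hc, mul_assoc, ← map_mul, hqone, map_one, mul_one]
      rw [hcval]
      ring

section avoids

variable {j : σ}

lemma avoids_mul {A B : MvPowerSeries σ K}
    (hA : ∀ e : σ →₀ ℕ, e j ≠ 0 → MvPowerSeries.coeff (R := K) e A = 0)
    (hB : ∀ e : σ →₀ ℕ, e j ≠ 0 → MvPowerSeries.coeff (R := K) e B = 0) :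
    ∀ e : σ →₀ ℕ, e j ≠ 0 → MvPowerSeries.coeff (R := K) e (A * B) = 0 := by
  classical
  intro e he
  rw [MvPowerSeries.coeff_mul]
  refine Finset.sum_eq_zero fun p hp => ?_
  rw [Finset.HasAntidiagonal.mem_antidiagonal] at hp
  have hsum : p.1 j + p.2 j = e j := by rw [← Finsupp.add_apply, hp]
  by_cases h1 : p.1 j = 0
  · have h2 : p.2 j ≠ 0 := by omega
    rw [hB _ h2, mul_zero]
  · rw [hA _ h1, zero_mul]

lemma avoids_one : ∀ e : σ →₀ ℕ, e j ≠ 0 →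
    MvPowerSeries.coeff (R := K) e (1 : MvPowerSeries σ K) = 0 := by
  classical
  intro e he
  rw [MvPowerSeries.coeff_one, if_neg]
  intro h
  rw [h] at he
  exact he rfl

lemma avoids_X {i : σ} (hij : i ≠ j) : ∀ e : σ →₀ ℕ, e j ≠ 0 →
    MvPowerSeries.coeff (R := K) e (MvPowerSeries.X i : MvPowerSeries σ K) = 0 := by
  classical
  intro e he
  rw [MvPowerSeries.coeff_X, if_neg]
  intro h
  rw [h, Finsupp.single_eq_of_ne' hij] at he
  exact he rfl

lemma avoids_sub {A B : MvPowerSeries σ K}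
    (hA : ∀ e : σ →₀ ℕ, e j ≠ 0 → MvPowerSeries.coeff (R := K) e A = 0)
    (hB : ∀ e : σ →₀ ℕ, e j ≠ 0 → MvPowerSeries.coeff (R := K) e B = 0) :
    ∀ e : σ →₀ ℕ, e j ≠ 0 → MvPowerSeries.coeff (R := K) e (A - B) = 0 := by
  intro e he
  rw [map_sub, hA e he, hB e he, sub_zero]

lemma avoids_fI [DecidableEq σ] {I : Finset σ} (hj : j ∉ I) (k : ℕ) :
    ∀ e : σ →₀ ℕ, e j ≠ 0 →
      MvPowerSeries.coeff (R := K) e ((1 - ∏ i ∈ I, (1 - MvPowerSeries.X i)) ^ k) = 0 := by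
  have hprod : ∀ e : σ →₀ ℕ, e j ≠ 0 →
      MvPowerSeries.coeff (R := K) e (∏ i ∈ I, (1 - MvPowerSeries.X i) : MvPowerSeries σ K) = 0 := by
    induction I using Finset.induction_on with
    | empty => rw [Finset.prod_empty]; exact avoids_one
    | @insert a s ha ih =>
      have hja : a ≠ j := fun h => hj (h ▸ Finset.mem_insert_self a s)
      have hjs : j ∉ s := fun h => hj (Finset.mem_insert_of_mem h)
      rw [Finset.prod_insert ha]
      exact avoids_mul (avoids_sub avoids_one (avoids_X hja)) (ih hjs)
  have hbase : ∀ e : σ →₀ ℕ, e j ≠ 0 →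
      MvPowerSeries.coeff (R := K) e (1 - ∏ i ∈ I, (1 - MvPowerSeries.X i) : MvPowerSeries σ K) = 0 :=
    avoids_sub avoids_one hprod
  induction k with
  | zero => rw [pow_zero]; exact avoids_one
  | succ k ih =>
    rw [pow_succ]
    exact avoids_mul ih hbase

end avoids

lemma constantCoeff_prod_one_sub [DecidableEq σ] (I : Finset σ) :
    MvPowerSeries.constantCoeff (σ := σ) (R := K) (∏ j ∈ I, (1 - MvPowerSeries.X j)) = 1 := by
  rw [map_prod]
  have h : ∀ j ∈ I, MvPowerSeries.constantCoeff (σ := σ) (R := K) (1 - MvPowerSeries.X j) = 1 := fun j _ => by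
    rw [map_sub, map_one, constantCoeff_X, sub_zero]
  rw [Finset.prod_congr rfl h, Finset.prod_const_one]

lemma constantCoeff_one_sub_prod [DecidableEq σ] (I : Finset σ) :
    MvPowerSeries.constantCoeff (σ := σ) (R := K) (1 - ∏ i ∈ I, (1 - MvPowerSeries.X i)) = 0 := by
  rw [map_sub, map_one, constantCoeff_prod_one_sub, sub_self]

lemma dg_eq_one {e : σ →₀ ℕ} (h : dg e = 1) : ∃ i, e = Finsupp.single i 1 := by
  classical
  have hne : e ≠ 0 := by
    intro h0
    rw [h0] at h
    have : dg (0 : σ →₀ ℕ) = 0 := Finsupp.sum_zero_index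
    omega
  obtain ⟨i, hi⟩ := Finsupp.support_nonempty_iff.mpr hne
  have hi1 : 1 ≤ e i := Nat.pos_of_ne_zero (Finsupp.mem_support_iff.mp hi)
  refine ⟨i, ?_⟩
  ext s
  rcases eq_or_ne s i with rfl | hs
  · rw [Finsupp.single_eq_same]
    have hle : e s ≤ dg e :=
      Finset.single_le_sum (f := fun t => e t) (fun _ _ => Nat.zero_le _) hi
    omega
  · rw [Finsupp.single_eq_of_ne' (Ne.symm hs)]
    by_contra hzero
    have hsmem : s ∈ e.support := Finsupp.mem_support_iff.mpr hzero
    have hpair : ({i, s} : Finset σ) ⊆ e.support := by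
      intro x hx
      rcases Finset.mem_insert.mp hx with rfl | hx
      · exact hi
      · rw [Finset.mem_singleton.mp hx]; exact hsmem
    have hle : ∑ x ∈ ({i, s} : Finset σ), e x ≤ dg e :=
      Finset.sum_le_sum_of_subset hpair
    rw [Finset.sum_pair (Ne.symm hs)] at hle
    have hs1 : 1 ≤ e s := Nat.pos_of_ne_zero hzero
    omega

lemma coeff_single_sum_X [DecidableEq σ] [Fintype σ] (i : σ) :
    MvPowerSeries.coeff (R := K) (Finsupp.single i 1) (∑ j : σ, MvPowerSeries.X j) = 1 := by
  rw [map_sum]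
  have h : ∀ j : σ, MvPowerSeries.coeff (R := K) (Finsupp.single i 1) (MvPowerSeries.X j : MvPowerSeries σ K)
      = if j = i then 1 else 0 := by
    intro j
    rw [MvPowerSeries.coeff_X]
    by_cases hj : j = i
    · subst hj; rw [if_pos rfl, if_pos rfl]
    · rw [if_neg, if_neg hj]
      intro hc
      exact hj (((Finsupp.single_left_inj one_ne_zero).mp hc).symm)
  rw [Finset.sum_congr rfl fun j _ => h j, Finset.sum_ite_eq' Finset.univ i, if_pos (mem_univ i)]

lemma coeff_prod_one_sub_single [DecidableEq σ] (I : Finset σ) (i : σ) :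
    MvPowerSeries.coeff (R := K) (Finsupp.single i 1) (∏ j ∈ I, (1 - MvPowerSeries.X j))
      = if i ∈ I then -1 else 0 := by
  induction I using Finset.induction_on with
  | empty =>
    rw [Finset.prod_empty, MvPowerSeries.coeff_one,
      if_neg (fun h => one_ne_zero (Finsupp.single_eq_zero.mp h)), if_neg (Finset.notMem_empty i)]
  | @insert a s ha ih =>
    rw [Finset.prod_insert ha, sub_mul, one_mul, map_sub, ih, X_def, coeff_monomial_mul]
    by_cases hai : a = i
    · subst hai
      rw [if_pos (le_refl _), tsub_self, one_mul, coeff_zero_eq_constantCoeff_apply,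
        constantCoeff_prod_one_sub, if_neg ha, if_pos (Finset.mem_insert_self a s)]
      ring
    · have hnle : ¬ Finsupp.single a 1 ≤ Finsupp.single i 1 := by
        rw [Finsupp.single_le_iff, Finsupp.single_eq_of_ne' fun h => hai h.symm]
        omega
      rw [if_neg hnle, sub_zero]
      have hmem : (i ∈ insert a s) ↔ (i ∈ s) := by
        rw [Finset.mem_insert]
        constructor
        · rintro (h | h)
          · exact (hai h.symm).elim
          · exact h
        · exact Or.inr
      rw [if_congr hmem rfl rfl]

lemma prod_X_monomial {ι : Type*} [DecidableEq ι] (t : Finset ι) (p : ι → σ) :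
    (∏ j ∈ t, (MvPowerSeries.X (p j) : MvPowerSeries σ K))
      = MvPowerSeries.monomial (R := K) (∑ j ∈ t, Finsupp.single (p j) 1) 1 := by
  induction t using Finset.induction_on with
  | empty => rw [Finset.prod_empty, Finset.sum_empty, monomial_zero_one]
  | @insert a s ha ih =>
    rw [Finset.prod_insert ha, Finset.sum_insert ha, ih, X_def, monomial_mul_monomial, one_mul]

lemma exists_decomp : ∀ (m : ℕ) (d : σ →₀ ℕ), dg d = m →
    ∃ p : Fin m → σ, (∑ j : Fin m, Finsupp.single (p j) 1) = d := by
  intro m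
  induction m with
  | zero =>
    intro d hd
    refine ⟨Fin.elim0, ?_⟩
    rw [Finset.univ_eq_empty, Finset.sum_empty]
    exact (dg_eq_zero hd).symm
  | succ m ih =>
    intro d hd
    have hne : d ≠ 0 := by
      intro h0
      rw [h0] at hd
      have : dg (0 : σ →₀ ℕ) = 0 := Finsupp.sum_zero_index
      omega
    obtain ⟨i, hi⟩ := Finsupp.support_nonempty_iff.mpr hne
    have hile : Finsupp.single i 1 ≤ d :=
      Finsupp.single_le_iff.mpr (Nat.pos_of_ne_zero (Finsupp.mem_support_iff.mp hi))
    have hcancel : d - Finsupp.single i 1 + Finsupp.single i 1 = d := tsub_add_cancel_of_le hile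
    have hdg' : dg (d - Finsupp.single i 1) = m := by
      have hadd := dg_add (d - Finsupp.single i 1) (Finsupp.single i 1)
      rw [hcancel, dg_single'] at hadd
      omega
    obtain ⟨p, hp⟩ := ih _ hdg'
    refine ⟨Fin.cons i p, ?_⟩
    rw [Fin.sum_univ_succ, Fin.cons_zero]
    have hstep : (∑ j : Fin m, Finsupp.single ((Fin.cons i p : Fin (m+1) → σ) j.succ) (1 : ℕ))
        = ∑ j : Fin m, Finsupp.single (p j) 1 := by
      refine Finset.sum_congr rfl fun j _ => ?_
      congr 1
    rw [hstep, hp, add_comm]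
    exact hcancel

lemma coeff_sumX_pow_pos [DecidableEq σ] [Fintype σ] (m : ℕ) (d : σ →₀ ℕ) (hd : dg d = m) :
    ∃ c : ℕ, 0 < c ∧
      MvPowerSeries.coeff (R := K) d ((∑ i : σ, MvPowerSeries.X i) ^ m) = (c : K) := by
  classical
  rw [Fintype.sum_pow, map_sum]
  have h : ∀ p : Fin m → σ,
      MvPowerSeries.coeff (R := K) d (∏ j : Fin m, (MvPowerSeries.X (p j) : MvPowerSeries σ K))
      = if d = ∑ j : Fin m, Finsupp.single (p j) 1 then 1 else 0 := by
    intro p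
    rw [prod_X_monomial, coeff_monomial]
  rw [Finset.sum_congr rfl fun p _ => h p, Finset.sum_boole]
  refine ⟨_, ?_, rfl⟩
  obtain ⟨p0, hp0⟩ := exists_decomp m d hd
  have hmem : p0 ∈ Finset.univ.filter
      (fun p : Fin m → σ => d = ∑ j : Fin m, Finsupp.single (p j) 1) :=
    Finset.mem_filter.mpr ⟨Finset.mem_univ _, hp0.symm⟩
  exact Finset.card_pos.mpr ⟨p0, hmem⟩

lemma coeff_pow_order2 {Q : MvPowerSeries σ K}
    (hQ : ∀ e : σ →₀ ℕ, dg e < 2 → MvPowerSeries.coeff (R := K) e Q = 0) (k : ℕ) :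
    ∀ e : σ →₀ ℕ, dg e < 2 * k → MvPowerSeries.coeff (R := K) e (Q ^ k) = 0 := by
  induction k with
  | zero => intro e he; omega
  | succ k ih =>
    intro e he
    rw [pow_succ]
    exact coeff_mul_order (a := 2 * k) (b := 2) ih hQ (by omega)

lemma coeff_low_one_sub_prod [DecidableEq σ] [Fintype σ] :
    ∀ e : σ →₀ ℕ, dg e < 2 →
      MvPowerSeries.coeff (R := K) e
        ((1 - ∏ i : σ, (1 - MvPowerSeries.X i)) - ∑ i : σ, MvPowerSeries.X i) = 0 := by
  intro e he
  rcases (by omega : dg e = 0 ∨ dg e = 1) with h0 | h1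
  · rw [dg_eq_zero h0, coeff_zero_eq_constantCoeff_apply, map_sub,
      constantCoeff_one_sub_prod, map_sum]
    rw [Finset.sum_congr rfl fun i _ => constantCoeff_X i, Finset.sum_const_zero, sub_zero]
  · obtain ⟨i, rfl⟩ := dg_eq_one h1
    rw [map_sub, map_sub, MvPowerSeries.coeff_one,
      if_neg (fun h => one_ne_zero (Finsupp.single_eq_zero.mp h)),
      coeff_prod_one_sub_single, if_pos (mem_univ i), coeff_single_sum_X]
    ring

lemma coeff_funiv_pow [DecidableEq σ] [Fintype σ] (m : ℕ) (d : σ →₀ ℕ) (hd : dg d = m) :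
    MvPowerSeries.coeff (R := K) d ((1 - ∏ i : σ, (1 - MvPowerSeries.X i)) ^ m)
      = MvPowerSeries.coeff (R := K) d ((∑ i : σ, MvPowerSeries.X i) ^ m) := by
  set Lin := ∑ i : σ, (MvPowerSeries.X i : MvPowerSeries σ K) with hLin
  set F := (1 - ∏ i : σ, (1 - MvPowerSeries.X i) : MvPowerSeries σ K) with hF
  have hLin0 : MvPowerSeries.constantCoeff (σ := σ) (R := K) Lin = 0 := by
    rw [hLin, map_sum, Finset.sum_congr rfl fun i _ => constantCoeff_X i,
      Finset.sum_const_zero]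
  have hQ : ∀ e : σ →₀ ℕ, dg e < 2 → MvPowerSeries.coeff (R := K) e (F - Lin) = 0 :=
    coeff_low_one_sub_prod
  have hFL : F = Lin + (F - Lin) := by ring
  rw [hFL, add_pow, map_sum, Finset.sum_eq_single m]
  · rw [Nat.sub_self, pow_zero, mul_one, Nat.choose_self, Nat.cast_one, mul_one]
  · intro j hj hjm
    rw [mem_range] at hj
    have hcast : MvPowerSeries.coeff (R := K) d
        (Lin ^ j * (F - Lin) ^ (m - j) * ((m.choose j : ℕ) : MvPowerSeries σ K))
        = ((m.choose j : ℕ) : K) * MvPowerSeries.coeff (R := K) d (Lin ^ j * (F - Lin) ^ (m - j)) := by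
      rw [mul_comm (Lin ^ j * (F - Lin) ^ (m - j)) _, ← nsmul_eq_mul, map_nsmul, nsmul_eq_mul]
    rw [hcast]
    have hzero : MvPowerSeries.coeff (R := K) d (Lin ^ j * (F - Lin) ^ (m - j)) = 0 := by
      refine coeff_mul_order (a := j) (b := 2 * (m - j))
        (coeff_pow_order hLin0 j) (coeff_pow_order2 hQ (m - j)) ?_
      omega
    rw [hzero, mul_zero]
  · intro hm
    exact absurd (self_mem_range_succ m) hm

lemma signed_sum {n : ℕ} (S : Finset (Fin n)) (hS : S ≠ Finset.univ) :
    ∑ I ∈ Finset.univ.filter (fun I : Finset (Fin n) => S ⊆ I),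
      ((-1 : ℤ)) ^ (n + I.card) = 0 := by
  classical
  have himg : Finset.univ.filter (fun I : Finset (Fin n) => S ⊆ I)
      = Sᶜ.powerset.image (fun t => S ∪ t) := by
    ext I
    simp only [Finset.mem_filter, Finset.mem_image, Finset.mem_powerset, Finset.mem_univ,
      true_and]
    constructor
    · intro hSI
      refine ⟨I \ S, ?_, Finset.union_sdiff_of_subset hSI⟩
      intro x hx
      rw [Finset.mem_compl]
      exact (Finset.mem_sdiff.mp hx).2
    · rintro ⟨t, _, rfl⟩
      exact Finset.subset_union_left
  have hinj : ∀ t1 ∈ Sᶜ.powerset, ∀ t2 ∈ Sᶜ.powerset,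
      S ∪ t1 = S ∪ t2 → t1 = t2 := by
    intro t1 h1 t2 h2 heq
    rw [Finset.mem_powerset] at h1 h2
    have hd1 : Disjoint S t1 := Finset.disjoint_left.mpr
      fun a haS hat => (Finset.mem_compl.mp (h1 hat)) haS
    have hd2 : Disjoint S t2 := Finset.disjoint_left.mpr
      fun a haS hat => (Finset.mem_compl.mp (h2 hat)) haS
    rw [← Finset.union_sdiff_cancel_left hd1, heq, Finset.union_sdiff_cancel_left hd2]
  rw [himg, Finset.sum_image hinj]
  have hcard : ∀ t ∈ Sᶜ.powerset, ((-1 : ℤ)) ^ (n + (S ∪ t).card)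
      = ((-1 : ℤ)) ^ (n + S.card) * ((-1 : ℤ)) ^ t.card := by
    intro t ht
    rw [Finset.mem_powerset] at ht
    have hd : Disjoint S t := Finset.disjoint_left.mpr
      fun a haS hat => (Finset.mem_compl.mp (ht hat)) haS
    rw [Finset.card_union_of_disjoint hd, ← pow_add, add_assoc]
  rw [Finset.sum_congr rfl hcard, ← Finset.mul_sum,
    Finset.sum_powerset_neg_one_pow_card, if_neg, mul_zero]
  intro hcompl
  apply hS
  rwa [Finset.compl_eq_empty_iff] at hcompl

end Aux


namespace Aux

open MvPowerSeries Finset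

variable {K : Type*} [CommRing K] [Algebra ℚ K]

lemma partialDeriv_add (m : ℕ) (G H : PowerSeries K) :
    partialDeriv m (G + H) = partialDeriv m G + partialDeriv m H := by
  rw [partialDeriv, partialDeriv, partialDeriv, ← Finset.sum_add_distrib]
  exact Finset.sum_congr rfl fun I _ => by rw [psubst_add, smul_add]

lemma partialDeriv_zero (m : ℕ) : partialDeriv m (0 : PowerSeries K) = 0 := by
  rw [partialDeriv]
  exact Finset.sum_eq_zero fun I _ => by rw [psubst_zero, smul_zero]

lemma partialDeriv_smul (m : ℕ) (c : K) (G : PowerSeries K) :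
    partialDeriv m (c • G) = c • partialDeriv m G := by
  rw [partialDeriv, partialDeriv, Finset.smul_sum]
  refine Finset.sum_congr rfl fun I _ => ?_
  rw [psubst_smul, ← Int.cast_smul_eq_zsmul K ((-1 : ℤ) ^ (m + I.card)),
    ← Int.cast_smul_eq_zsmul K ((-1 : ℤ) ^ (m + I.card)), smul_smul, smul_smul, mul_comm]

lemma partialDeriv_sub (m : ℕ) (G H : PowerSeries K) :
    partialDeriv m (G - H) = partialDeriv m G - partialDeriv m H := by
  have h := partialDeriv_add m (G - H) H
  rw [sub_add_cancel] at h
  rw [h]; ring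

lemma partialDeriv_lg {n r : ℕ} (hn : 0 < n) (hr : r < n) :
    partialDeriv n (lg (K := K) r) = 0 := by
  classical
  set Li : Fin n → MvPowerSeries (Fin n) K :=
    fun i => psubst (MvPowerSeries.X i) (logOneSub (K := K)) with hLi
  have step1 : ∀ I : Finset (Fin n),
      psubst (1 - ∏ i ∈ I, (1 - MvPowerSeries.X i)) (lg (K := K) r)
      = ((r.factorial : ℚ))⁻¹ • ((∑ i ∈ I, Li i) ^ r) := by
    intro I
    rw [lg, psubst_qsmul, psubst_pow (constantCoeff_one_sub_prod I), log_prod]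
  rw [partialDeriv, Finset.sum_congr rfl fun I _ => by rw [step1 I]]
  have hconv : ∀ (z : ℤ) (A : MvPowerSeries (Fin n) K) (q : ℚ),
      z • (q • A) = q • (((z : ℚ)) • A) := by
    intro z A q
    rw [← Int.cast_smul_eq_zsmul ℚ z (q • A), smul_smul, mul_comm, ← smul_smul]
  rw [Finset.sum_congr rfl fun I _ => hconv _ _ _, ← Finset.smul_sum]
  have expand : ∀ I : Finset (Fin n), ((∑ i ∈ I, Li i) ^ r)
      = ∑ p : Fin r → Fin n, (if ∀ j, p j ∈ I then (∏ j : Fin r, Li (p j)) else 0) := by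
    intro I
    have h1 : (∑ i ∈ I, Li i) = ∑ i : Fin n, if i ∈ I then Li i else 0 := by
      rw [Finset.sum_ite_mem, Finset.univ_inter]
    rw [h1, Fintype.sum_pow]
    refine Finset.sum_congr rfl fun p _ => ?_
    by_cases hp : ∀ j, p j ∈ I
    · rw [if_pos hp]
      exact Finset.prod_congr rfl fun j _ => if_pos (hp j)
    · rw [if_neg hp]
      push_neg at hp
      obtain ⟨j, hj⟩ := hp
      exact Finset.prod_eq_zero (mem_univ j) (if_neg hj)
  have hinner : (∑ I : Finset (Fin n),
      (((((-1 : ℤ) ^ (n + I.card)) : ℤ) : ℚ)) • ((∑ i ∈ I, Li i) ^ r)) = 0 := by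
    rw [Finset.sum_congr rfl fun I _ => by rw [expand I],
      Finset.sum_congr rfl fun I _ => Finset.smul_sum, Finset.sum_comm]
    refine Finset.sum_eq_zero fun p _ => ?_
    set S := Finset.image p Finset.univ with hS
    have hform : ∀ I : Finset (Fin n),
        (((((-1 : ℤ) ^ (n + I.card)) : ℤ) : ℚ)) • (if ∀ j, p j ∈ I then (∏ j : Fin r, Li (p j)) else 0)
        = (if S ⊆ I then (((((-1 : ℤ) ^ (n + I.card)) : ℤ) : ℚ)) else 0) • (∏ j : Fin r, Li (p j)) := by
      intro I
      by_cases h : ∀ j, p j ∈ I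
      · rw [if_pos h, if_pos (by rw [hS, Finset.image_subset_iff]; exact fun j _ => h j)]
      · rw [if_neg h, if_neg (fun hs => h fun j => hs (Finset.mem_image_of_mem p (mem_univ j))),
          smul_zero, zero_smul]
    rw [Finset.sum_congr rfl fun I _ => hform I, ← Finset.sum_smul]
    have hSne : S ≠ Finset.univ := by
      intro h
      have h2 : S.card ≤ r := le_trans Finset.card_image_le (by simp)
      rw [h, Finset.card_univ, Fintype.card_fin] at h2
      omega
    have hzero : (∑ I : Finset (Fin n),
        if S ⊆ I then (((((-1 : ℤ) ^ (n + I.card)) : ℤ) : ℚ)) else 0) = 0 := by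
      rw [← Finset.sum_filter]
      have hcast : (∑ I ∈ Finset.univ.filter (fun I : Finset (Fin n) => S ⊆ I),
          (((((-1 : ℤ) ^ (n + I.card)) : ℤ) : ℚ)))
          = (((∑ I ∈ Finset.univ.filter (fun I : Finset (Fin n) => S ⊆ I),
              (-1 : ℤ) ^ (n + I.card)) : ℤ) : ℚ) := by
        push_cast
        rfl
      rw [hcast, signed_sum S hSne, Int.cast_zero]
    rw [hzero, zero_smul]
  rw [hinner, smul_zero]

end Aux

open Aux MvPowerSeries Finset in
/-- For `n > 0`, the kernel of `∂^{n-1} : K[[x]] → K[[x₁,…,x_n]]` is the `K`-linear span of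
the series `lg_r(x)`, `0 ≤ r < n`. -/
theorem ker_partialDeriv (n : ℕ) (hn : 0 < n) (G : PowerSeries K) :
    partialDeriv n G = 0 ↔ G ∈ Submodule.span K (lg (K := K) '' Set.Iio n) := by
  classical
  constructor
  · intro hpd
    obtain ⟨b, hb⟩ := exists_expansion G n
    set P := ∑ r ∈ Finset.range n, b r • lg (K := K) r with hP
    have hPmem : P ∈ Submodule.span K (lg (K := K) '' Set.Iio n) := by
      refine Submodule.sum_mem _ fun r hr => Submodule.smul_mem _ _ (Submodule.subset_span ?_)
      exact ⟨r, Finset.mem_range.mp hr, rfl⟩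
    have hPpd : partialDeriv n P = 0 := by
      have key : ∀ s : Finset ℕ, (∀ r ∈ s, r < n) →
          partialDeriv n (∑ r ∈ s, b r • lg (K := K) r) = 0 := by
        intro s
        induction s using Finset.induction_on with
        | empty => intro _; rw [Finset.sum_empty]; exact partialDeriv_zero n
        | @insert a t ha ih =>
          intro hall
          rw [Finset.sum_insert ha, partialDeriv_add, partialDeriv_smul,
            partialDeriv_lg hn (hall a (Finset.mem_insert_self a t)), smul_zero,
            ih (fun r hr => hall r (Finset.mem_insert_of_mem hr)), add_zero]
      exact key _ fun r hr => Finset.mem_range.mp hr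
    set H := G - P with hH
    have hHlow : ∀ s, s < n → PowerSeries.coeff (R := K) s H = 0 := by
      intro s hs
      rw [hH, map_sub, ← hb s hs, sub_self]
    have hHpd : partialDeriv n H = 0 := by
      rw [hH, partialDeriv_sub, hpd, hPpd, sub_zero]
    have hcoeffs : ∀ m, PowerSeries.coeff (R := K) m H = 0 := by
      intro m
      induction m using Nat.strong_induction_on with
      | _ m ih =>
        rcases Nat.lt_or_ge m n with hlt | hge
        · exact hHlow m hlt
        · set i0 : Fin n := ⟨0, hn⟩ with hi0
          set d : Fin n →₀ ℕ :=
            Finsupp.equivFunOnFinite.symm (fun i => if i = i0 then m - n + 1 else 1) with hd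
          have hdapp : ∀ i : Fin n, d i = if i = i0 then m - n + 1 else 1 := fun i => rfl
          have hdpos : ∀ i : Fin n, 0 < d i := by
            intro i
            rw [hdapp]
            split <;> omega
          have hdg : dg d = m := by
            have h1 : dg d = ∑ i : Fin n, d i :=
              Finsupp.sum_fintype _ _ fun _ => rfl
            have h2 : ∑ i : Fin n, d i = d i0 + ∑ i ∈ Finset.univ.erase i0, d i :=
              (Finset.add_sum_erase _ _ (mem_univ i0)).symm
            have h3 : ∑ i ∈ Finset.univ.erase i0, d i = n - 1 := by
              have hc : ∀ i ∈ Finset.univ.erase i0, d i = 1 := by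
                intro i hi
                rw [hdapp, if_neg (Finset.mem_erase.mp hi).1]
              rw [Finset.sum_congr rfl hc, Finset.sum_const, Finset.card_erase_of_mem (mem_univ i0),
                Finset.card_univ, Fintype.card_fin, smul_eq_mul, mul_one]
            have h4 : d i0 = m - n + 1 := by rw [hdapp, if_pos rfl]
            rw [h1, h2, h3, h4]
            omega
          have hco := congrArg (MvPowerSeries.coeff (R := K) d) hHpd
          rw [map_zero, partialDeriv, map_sum] at hco
          have hterm : ∀ I : Finset (Fin n), I ∈ Finset.univ → I ≠ Finset.univ →
              MvPowerSeries.coeff (R := K) d (((-1 : ℤ) ^ (n + I.card)) •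
                psubst (1 - ∏ i ∈ I, (1 - MvPowerSeries.X i)) H) = 0 := by
            intro I _ hne
            have hnsub : ¬ ((Finset.univ : Finset (Fin n)) ⊆ I) :=
              fun hsub => hne (Finset.univ_subset_iff.mp hsub)
            obtain ⟨j, -, hj⟩ := Finset.not_subset.mp hnsub
            rw [map_zsmul, coeff_psubst]
            have hz : ∀ k ∈ range (dg d + 1),
                PowerSeries.coeff (R := K) k H *
                  MvPowerSeries.coeff (R := K) d ((1 - ∏ i ∈ I, (1 - MvPowerSeries.X i)) ^ k) = 0 := by
              intro k _
              rw [avoids_fI hj k d (by have := hdpos j; omega), mul_zero]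
            rw [Finset.sum_eq_zero hz, smul_zero]
          rw [Finset.sum_eq_single Finset.univ (hterm) (fun h => absurd (mem_univ _) h)] at hco
          rw [map_zsmul] at hco
          have hpow : ((-1 : ℤ)) ^ (n + (Finset.univ : Finset (Fin n)).card) = 1 := by
            rw [Finset.card_univ, Fintype.card_fin]
            exact Even.neg_one_pow ⟨n, rfl⟩
          rw [hpow, one_smul, coeff_psubst, hdg] at hco
          have hsing : ∀ k ∈ range (m + 1), k ≠ m →
              PowerSeries.coeff (R := K) k H *
                MvPowerSeries.coeff (R := K) d ((1 - ∏ i : Fin n, (1 - MvPowerSeries.X i)) ^ k) = 0 := by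
            intro k hk hkm
            rw [mem_range] at hk
            rcases Nat.lt_or_ge k n with h | h
            · rw [hHlow k h, zero_mul]
            · rw [ih k (by omega), zero_mul]
          rw [Finset.sum_eq_single m hsing
            (fun h => absurd (self_mem_range_succ m) h)] at hco
          obtain ⟨c, hcpos, hcval⟩ := coeff_sumX_pow_pos (K := K) m d hdg
          rw [coeff_funiv_pow m d hdg, hcval] at hco
          rw [show ((c : K)) = algebraMap ℚ K ((c : ℚ)) from (map_natCast _ _).symm] at hco
          exact unit_cancel (Nat.cast_ne_zero.mpr (by omega)) hco
    have hH0 : H = 0 := by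
      ext m
      rw [hcoeffs m, map_zero]
    rw [hH, sub_eq_zero] at hH0
    rw [hH0]
    exact hPmem
  · intro hmem
    induction hmem using Submodule.span_induction with
    | mem x hx =>
      obtain ⟨r, hr, rfl⟩ := hx
      exact partialDeriv_lg hn hr
    | zero => exact partialDeriv_zero n
    | add x y _ _ hx hy => rw [partialDeriv_add, hx, hy, add_zero]
    | smul c x _ hx => rw [partialDeriv_smul, hx, smul_zero]
end

section
/- Let $K$ be a $\mathbb{Q}$-algebra, $G \in K[[x]]$, and $n \ge 1$. With $\partial$ the partial derivative for the multiplicative formal group law $x*y = x + y - xy$, one has $(\partial^n G)(x_1, \dots, x_{n+1}) = \sum_{k=1}^{\infty} \frac{1}{k!} \, \partial^{n-1}\!\left((1-x)^k \frac{d^k G}{dx^k}\right)(x_1, \dots, x_n) \cdot x_{n+1}^k$. -/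
variable {K : Type*} [CommRing K] [Algebra ℚ K]

open PowerSeries


set_option linter.unusedSectionVars false
set_option linter.unusedVariables false
set_option maxHeartbeats 1000000

section Aux
open Finset

lemma aux_alt (j : ℕ) : ∀ (k b : ℕ),
    ∑ a ∈ Finset.range (k+1), (-1:ℤ)^a * (k.choose a) * ((b+a).choose j)
      = if k ≤ j then (-1:ℤ)^k * (b.choose (j-k)) else 0 := by
  intro k
  induction k with
  | zero => intro b; simp
  | succ k ih =>
    intro b
    have key : (∑ a ∈ Finset.range (k+2), (-1:ℤ)^a * ((k+1).choose a) * ((b+a).choose j))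
        = (∑ a ∈ Finset.range (k+1), (-1:ℤ)^a * (k.choose a) * ((b+a).choose j))
          - (∑ a ∈ Finset.range (k+1), (-1:ℤ)^a * (k.choose a) * (((b+1)+a).choose j)) := by
      rw [Finset.sum_range_succ' _ (k+1)]
      have e2 : ∀ i ∈ Finset.range (k+1),
          (-1:ℤ)^(i+1) * ((k+1).choose (i+1)) * ((b+(i+1)).choose j)
          = -((-1:ℤ)^i * (k.choose i) * (((b+1)+i).choose j))
            + (-1:ℤ)^(i+1) * (k.choose (i+1)) * ((b+(i+1)).choose j) := by
        intro i _
        have e1 : ((k+1).choose (i+1) : ℤ) = (k.choose i : ℤ) + (k.choose (i+1) : ℤ) := by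
          rw [Nat.choose_succ_succ]; push_cast; ring
        have e4 : b + (i+1) = (b+1) + i := by ring
        rw [e1, e4]; ring
      rw [Finset.sum_congr rfl e2, Finset.sum_add_distrib]
      have e5 : (∑ a ∈ Finset.range (k+1), (-1:ℤ)^a * (k.choose a) * ((b+a).choose j))
          = ∑ i ∈ Finset.range k, (-1:ℤ)^(i+1) * (k.choose (i+1)) * ((b+(i+1)).choose j)
            + (-1:ℤ)^0 * (k.choose 0) * ((b+0).choose j) :=
        Finset.sum_range_succ' _ k
      have e6 : (∑ i ∈ Finset.range (k+1), (-1:ℤ)^(i+1) * (k.choose (i+1)) * ((b+(i+1)).choose j))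
          = ∑ i ∈ Finset.range k, (-1:ℤ)^(i+1) * (k.choose (i+1)) * ((b+(i+1)).choose j) := by
        rw [Finset.sum_range_succ]
        simp [Nat.choose_succ_self]
      rw [e6, e5]
      rw [Finset.sum_neg_distrib]
      simp only [Nat.choose_zero_right, pow_zero, Nat.cast_one]
      ring
    rw [show k + 1 + 1 = k + 2 from rfl, key, ih, ih]
    by_cases h1 : k + 1 ≤ j
    · rw [if_pos h1, if_pos (Nat.le_of_succ_le h1), if_pos (Nat.le_of_succ_le h1)]
      have hr : j - k = (j - (k+1)) + 1 := by omega
      rw [hr, Nat.choose_succ_succ b (j - (k+1))]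
      push_cast
      ring
    · by_cases h2 : k ≤ j
      · have hjk : j = k := by omega
        subst hjk
        simp
      · rw [if_neg h2, if_neg h2, if_neg h1]; ring

lemma aux_tri (k b j : ℕ) (h : k ≤ j) :
    (k+b).choose j * j.choose k = (k+b).choose k * b.choose (j-k) := by
  by_cases hj : j ≤ k + b
  · rw [Nat.choose_mul h, Nat.add_sub_cancel_left]
  · rw [Nat.choose_eq_zero_of_lt (show k+b < j by omega),
      Nat.choose_eq_zero_of_lt (show b < j - k by omega)]
    simp

lemma aux_perj (k b j : ℕ) :
    (-1:ℤ)^(j+k) * ((k+b).choose j) * (j.choose k)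
      = (-1:ℤ)^j * ((k+b).choose k) *
        ∑ a ∈ Finset.range (k+1), (-1:ℤ)^a * (k.choose a) * ((b+a).choose j) := by
  rw [aux_alt]
  by_cases h : k ≤ j
  · rw [if_pos h]
    have := aux_tri k b j h
    have h2 : ((k+b).choose j * j.choose k : ℤ) = ((k+b).choose k * b.choose (j-k) : ℤ) := by
      exact_mod_cast congrArg (Nat.cast : ℕ → ℤ) this
    rw [pow_add]
    linear_combination ((-1:ℤ)^j * (-1:ℤ)^k) * h2
  · rw [if_neg h, Nat.choose_eq_zero_of_lt (by omega : j < k)]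
    push_cast
    ring

-- coefficient of (1 - X s)^c
lemma aux_coeff_one_sub_X_pow {σ : Type*} [DecidableEq σ] (s : σ) (c : ℕ) (u : σ →₀ ℕ) :
    MvPowerSeries.coeff u ((1 - MvPowerSeries.X s)^c)
      = if u = Finsupp.single s (u s) then (-1:K)^(u s) * (c.choose (u s)) else 0 := by
  have hexp : (1 - MvPowerSeries.X s : MvPowerSeries σ K)^c
      = ∑ r ∈ Finset.range (c+1),
          (-MvPowerSeries.X s)^r * (1:MvPowerSeries σ K)^(c-r) * ((c.choose r : ℕ) : MvPowerSeries σ K) := by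
    rw [sub_eq_add_neg, add_comm]
    exact add_pow _ _ _
  rw [hexp, map_sum]
  have hterm : ∀ r ∈ Finset.range (c+1),
      MvPowerSeries.coeff u ((-MvPowerSeries.X s)^r * (1:MvPowerSeries σ K)^(c-r) * ((c.choose r : ℕ) : MvPowerSeries σ K))
        = if u = Finsupp.single s r then (-1:K)^r * (c.choose r) else 0 := by
    intro r _
    rw [one_pow, mul_one, neg_pow]
    have : ((-1:MvPowerSeries σ K)^r * MvPowerSeries.X s ^ r) * ((c.choose r : ℕ) : MvPowerSeries σ K)
        = ((-1:K)^r * (c.choose r : K)) • (MvPowerSeries.X s ^ r : MvPowerSeries σ K) := by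
      rw [MvPowerSeries.smul_eq_C_mul, map_mul, map_pow]
      push_cast
      simp only [map_neg, map_one, map_natCast]
      ring
    rw [this, map_smul, MvPowerSeries.coeff_X_pow, smul_eq_mul, mul_ite, mul_one, mul_zero]
  rw [Finset.sum_congr rfl hterm]
  by_cases h : u = Finsupp.single s (u s)
  · rw [if_pos h]
    have huniq : ∀ r, (u = Finsupp.single s r) ↔ r = u s := by
      intro r
      constructor
      · intro hr
        have := congrArg (fun v => v s) hr
        simpa using this.symm
      · intro hr; rw [hr]; exact h
    simp only [huniq]
    rw [Finset.sum_ite_eq' (Finset.range (c+1)) (u s) (fun r => (-1:K)^r * (c.choose r))]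
    by_cases hc : u s ∈ Finset.range (c+1)
    · rw [if_pos hc]
    · rw [if_neg hc]
      rw [Nat.choose_eq_zero_of_lt (by simpa using hc)]
      simp
  · rw [if_neg h]
    apply Finset.sum_eq_zero
    intro r _
    rw [if_neg]
    intro hr
    exact h (by rw [hr]; simp)

-- coefficient of ∏ i ∈ S, (1 - X i)^j
lemma aux_coeff_prod {σ : Type*} [DecidableEq σ] (S : Finset σ) (j : ℕ) (e : σ →₀ ℕ) :
    MvPowerSeries.coeff e (∏ i ∈ S, (1 - MvPowerSeries.X i)^j)
      = if e.support ⊆ S then ∏ i ∈ S, ((-1:K)^(e i) * (j.choose (e i))) else 0 := by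
  induction S using Finset.induction_on generalizing e with
  | empty =>
    by_cases h : e = 0 <;> simp [h, MvPowerSeries.coeff_one]
  | @insert a S ha ih =>
    rw [Finset.prod_insert ha, MvPowerSeries.coeff_mul]
    rw [Finset.sum_eq_single (Finsupp.single a (e a), e.erase a)]
    · rw [aux_coeff_one_sub_X_pow]
      simp only
      rw [if_pos (by simp), ih]
      have hsupp : ((e.erase a).support ⊆ S) ↔ (e.support ⊆ insert a S) := by
        rw [Finsupp.support_erase]
        constructor
        · intro h x hx
          by_cases hxa : x = a
          · simp [hxa]
          · have : x ∈ e.support.erase a := Finset.mem_erase.mpr ⟨hxa, hx⟩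
            exact Finset.mem_insert_of_mem (h this)
        · intro h x hx
          rcases Finset.mem_erase.mp hx with ⟨hxa, hxe⟩
          rcases Finset.mem_insert.mp (h hxe) with h1 | h2
          · exact absurd h1 hxa
          · exact h2
      by_cases hs : e.support ⊆ insert a S
      · rw [if_pos (hsupp.mpr hs), if_pos hs, Finset.prod_insert ha]
        simp only [Finsupp.single_eq_same]
        congr 1
        apply Finset.prod_congr rfl
        intro i hi
        rw [Finsupp.erase_ne (fun hia => ha (by rwa [hia] at hi))]
      · rw [if_neg (fun hh => hs (hsupp.mp hh)), if_neg hs, mul_zero]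
    · rintro ⟨u, v⟩ hmem hne
      rw [Finset.HasAntidiagonal.mem_antidiagonal] at hmem
      simp only
      rw [aux_coeff_one_sub_X_pow]
      by_cases hu : u = Finsupp.single a (u a)
      · rw [ih]
        by_cases hv : v.support ⊆ S
        · exfalso
          apply hne
          have hva : v a = 0 := by
            by_contra hva
            exact ha (hv (Finsupp.mem_support_iff.mpr hva))
          have hua : u a = e a := by
            have := congrArg (fun f => f a) hmem
            simpa [hva] using this
          have hu' : u = Finsupp.single a (e a) := hua ▸ hu
          have hv' : v = e.erase a := by
            have h1 : Finsupp.single a (e a) + e.erase a = e := Finsupp.single_add_erase a e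
            have h2 : u + v = e := hmem
            rw [hu'] at h2
            exact add_left_cancel (h2.trans h1.symm)
          rw [hu', hv']
        · rw [if_neg hv, mul_zero]
      · rw [if_neg hu, zero_mul]
    · intro hmem
      exact absurd (Finset.HasAntidiagonal.mem_antidiagonal.mpr (Finsupp.single_add_erase a e)) hmem

-- binomial expansion of coeff of (1 - P)^m for P a product
lemma aux_expand {σ : Type*} [DecidableEq σ] (S : Finset σ) (m : ℕ) (e : σ →₀ ℕ) :
    MvPowerSeries.coeff e ((1 - ∏ i ∈ S, (1 - MvPowerSeries.X i))^m)
      = ∑ j ∈ Finset.range (m+1), (-1:K)^j * (m.choose j) *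
          MvPowerSeries.coeff e (∏ i ∈ S, (1 - MvPowerSeries.X i)^j) := by
  have hexp : (1 - ∏ i ∈ S, (1 - MvPowerSeries.X i) : MvPowerSeries σ K)^m
      = ∑ j ∈ Finset.range (m+1),
          (-(∏ i ∈ S, (1 - MvPowerSeries.X i)))^j * (1:MvPowerSeries σ K)^(m-j)
            * ((m.choose j : ℕ) : MvPowerSeries σ K) := by
    rw [sub_eq_add_neg, add_comm]
    exact add_pow _ _ _
  rw [hexp, map_sum]
  apply Finset.sum_congr rfl
  intro j _
  rw [one_pow, mul_one, neg_pow, ← Finset.prod_pow]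
  have : ((-1:MvPowerSeries σ K)^j * (∏ i ∈ S, (1 - MvPowerSeries.X i)^j))
        * ((m.choose j : ℕ) : MvPowerSeries σ K)
      = ((-1:K)^j * (m.choose j : K)) • (∏ i ∈ S, (1 - MvPowerSeries.X i)^j) := by
    rw [MvPowerSeries.smul_eq_C_mul, map_mul, map_pow]
    simp only [map_neg, map_one, map_natCast]
    ring
  rw [this, map_smul, smul_eq_mul, mul_assoc]

-- vanishing of high powers
lemma aux_vanish {σ : Type*} (S : Finset σ) (m : ℕ) (e : σ →₀ ℕ)
    (h : e.degree < m) :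
    MvPowerSeries.coeff (R := K) e ((1 - ∏ i ∈ S, (1 - MvPowerSeries.X i))^m) = 0 := by
  classical
  apply MvPowerSeries.coeff_eq_zero_of_constantCoeff_nilpotent (m := 1)
  · rw [pow_one, map_sub, map_one, map_prod]
    simp [MvPowerSeries.constantCoeff_X]
  · omega

-- one-variable version
lemma aux_coeff_one_sub_X_pow_one (c a : ℕ) :
    PowerSeries.coeff a ((1 - PowerSeries.X)^c) = (-1:K)^a * (c.choose a) := by
  have hexp : (1 - PowerSeries.X : PowerSeries K)^c
      = ∑ r ∈ Finset.range (c+1),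
          (-PowerSeries.X)^r * (1:PowerSeries K)^(c-r) * ((c.choose r : ℕ) : PowerSeries K) := by
    rw [sub_eq_add_neg, add_comm]
    exact add_pow _ _ _
  rw [hexp, map_sum]
  have hterm : ∀ r ∈ Finset.range (c+1),
      PowerSeries.coeff a ((-PowerSeries.X)^r * (1:PowerSeries K)^(c-r) * ((c.choose r : ℕ) : PowerSeries K))
        = if a = r then (-1:K)^r * (c.choose r) else 0 := by
    intro r _
    rw [one_pow, mul_one, neg_pow]
    have : ((-1:PowerSeries K)^r * PowerSeries.X ^ r) * ((c.choose r : ℕ) : PowerSeries K)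
        = ((-1:K)^r * (c.choose r : K)) • (PowerSeries.X ^ r : PowerSeries K) := by
      rw [PowerSeries.smul_eq_C_mul, map_mul, map_pow, map_neg, map_one, map_natCast]
      ring
    rw [this, map_smul, PowerSeries.coeff_X_pow, smul_eq_mul, mul_ite, mul_one, mul_zero]
  rw [Finset.sum_congr rfl hterm, Finset.sum_ite_eq (Finset.range (c+1)) a
    (fun r => (-1:K)^r * (c.choose r))]
  by_cases hc : a ∈ Finset.range (c+1)
  · rw [if_pos hc]
  · rw [if_neg hc, Nat.choose_eq_zero_of_lt (by simpa using hc)]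
    simp

-- iterated derivative coefficient
lemma aux_deriv (G : PowerSeries K) (k b : ℕ) :
    PowerSeries.coeff b (PowerSeries.derivativeFun^[k] G)
      = ((b+k).descFactorial k : K) * PowerSeries.coeff (b+k) G := by
  induction k generalizing b with
  | zero => simp
  | succ k ih =>
    have hder : ∀ (f : PowerSeries K) (b : ℕ), PowerSeries.coeff b (PowerSeries.derivativeFun f)
        = PowerSeries.coeff (b + 1) f * (b + 1) := fun f b => PowerSeries.coeff_derivative f b
    rw [Function.iterate_succ_apply', hder, ih]
    have h1 : b + 1 + k = b + (k+1) := by ring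
    have h2 : (b + (k+1)).descFactorial (k+1) = (b+1) * (b + 1 + k).descFactorial k := by
      rw [Nat.descFactorial_succ]
      have : b + (k+1) - k = b + 1 := by omega
      rw [this, h1]
    rw [h1, h2]
    push_cast
    ring

lemma aux_sum_eq {α M : Type*} [AddCommMonoid M] [DecidableEq α] (s t : Finset α) (f : α → M)
    (hs : ∀ p ∈ s, p ∉ t → f p = 0) (ht : ∀ p ∈ t, p ∉ s → f p = 0) :
    ∑ p ∈ s, f p = ∑ p ∈ t, f p := by
  have h1 : ∑ p ∈ s ∩ t, f p = ∑ p ∈ s, f p :=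
    Finset.sum_subset Finset.inter_subset_left
      (fun x hx hnx => hs x hx (fun hxt => hnx (Finset.mem_inter.mpr ⟨hx, hxt⟩)))
  have h2 : ∑ p ∈ s ∩ t, f p = ∑ p ∈ t, f p :=
    Finset.sum_subset Finset.inter_subset_right
      (fun x hx hnx => ht x hx (fun hxs => hnx (Finset.mem_inter.mpr ⟨hxs, hx⟩)))
  rw [← h1, h2]

lemma aux_last_not_mem (n : ℕ) (J : Finset (Fin n)) :
    Fin.last n ∉ J.map Fin.castSuccEmb := by
  intro h
  rcases Finset.mem_map.mp h with ⟨i, -, hi⟩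
  exact (Fin.castSucc_lt_last i).ne hi

lemma aux_split {n : ℕ} {M : Type*} [AddCommMonoid M] (F : Finset (Fin (n+1)) → M) :
    ∑ I : Finset (Fin (n+1)), F I
      = ∑ J : Finset (Fin n),
          (F (J.map Fin.castSuccEmb) + F (insert (Fin.last n) (J.map Fin.castSuccEmb))) := by
  have hmap : ∀ (G : Finset (Fin (n+1)) → M),
      ∑ t ∈ (Finset.univ.map Fin.castSuccEmb : Finset (Fin (n+1))).powerset, G t
        = ∑ J : Finset (Fin n), G (J.map Fin.castSuccEmb) := by
    intro G
    symm
    apply Finset.sum_bij (i := fun (J : Finset (Fin n)) (_ : J ∈ Finset.univ) => J.map Fin.castSuccEmb)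
    · intro J _
      exact Finset.mem_powerset.mpr (Finset.map_subset_map.mpr (Finset.subset_univ J))
    · intro J1 _ J2 _ h
      exact Finset.map_injective _ h
    · intro t ht
      rcases Finset.subset_map_iff.mp (Finset.mem_powerset.mp ht) with ⟨u, -, rfl⟩
      exact ⟨u, Finset.mem_univ u, rfl⟩
    · intro J _
      rfl
  rw [← Finset.powerset_univ, Fin.univ_castSuccEmb, Finset.cons_eq_insert,
    Finset.sum_powerset_insert (aux_last_not_mem n Finset.univ), hmap, hmap,
    ← Finset.sum_add_distrib]

lemma aux_main (n k : ℕ) (G : PowerSeries K) (d' : Fin n →₀ ℕ) (J : Finset (Fin n))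
    (d : Fin (n+1) →₀ ℕ)
    (hd_last : d (Fin.last n) = k)
    (hd_cs : ∀ i, d (Fin.castSucc i) = d' i)
    (hsupp : d.support ⊆ insert (Fin.last n) (J.map Fin.castSuccEmb) ↔ d'.support ⊆ J) :
    (k.factorial : K) * (∑ m ∈ Finset.range (d'.degree + k + 1), PowerSeries.coeff m G *
        MvPowerSeries.coeff d
          ((1 - ∏ i ∈ insert (Fin.last n) (J.map Fin.castSuccEmb), (1 - MvPowerSeries.X i))^m))
      = ∑ m ∈ Finset.range (d'.degree + 1),
          PowerSeries.coeff m ((1 - PowerSeries.X)^k * (PowerSeries.derivativeFun^[k] G)) *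
          MvPowerSeries.coeff d' ((1 - ∏ i ∈ J, (1 - MvPowerSeries.X i))^m) := by
  classical
  set D := d'.degree with hD
  set g : ℕ → K := fun m => PowerSeries.coeff m G with hg
  set c : ℕ → K := fun m => MvPowerSeries.coeff d' ((1 - ∏ i ∈ J, (1 - MvPowerSeries.X i))^m)
    with hcdef
  set q : ℕ → K := fun j => if d'.support ⊆ J
      then ∏ i ∈ J, ((-1:K)^(d' i) * ((j.choose (d' i) : ℕ) : K)) else 0 with hqdef
  have hc : ∀ m, c m = ∑ j ∈ Finset.range (m+1), (-1:K)^j * (m.choose j) * q j := by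
    intro m
    rw [hcdef]
    simp only
    rw [aux_expand]
    refine Finset.sum_congr rfl fun j _ => ?_
    rw [aux_coeff_prod, hqdef]
  have hcz : ∀ m, D < m → c m = 0 := fun m hm => aux_vanish J m d' hm
  -- coefficient over the big index set
  have hcoeffSJ : ∀ j : ℕ,
      MvPowerSeries.coeff d (∏ i ∈ insert (Fin.last n) (J.map Fin.castSuccEmb),
        (1 - MvPowerSeries.X i)^j)
      = (-1:K)^k * (j.choose k) * q j := by
    intro j
    rw [aux_coeff_prod]
    by_cases hsub : d'.support ⊆ J
    · rw [if_pos (hsupp.mpr hsub), Finset.prod_insert (aux_last_not_mem n J), hd_last,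
        Finset.prod_map, hqdef]
      simp only [if_pos hsub]
      congr 1
      refine Finset.prod_congr rfl fun i _ => ?_
      rw [Fin.coe_castSuccEmb, hd_cs]
    · rw [if_neg (fun h => hsub (hsupp.mp h)), hqdef]
      simp only [if_neg hsub, mul_zero]
  have hkey2 : ∀ m, m < k → MvPowerSeries.coeff (R := K) d
      ((1 - ∏ i ∈ insert (Fin.last n) (J.map Fin.castSuccEmb), (1 - MvPowerSeries.X i))^m) = 0 := by
    intro m hm
    rw [aux_expand]
    refine Finset.sum_eq_zero fun j hj => ?_
    rw [hcoeffSJ j, Nat.choose_eq_zero_of_lt (lt_of_le_of_lt (Nat.lt_succ_iff.mp (mem_range.mp hj)) hm)]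
    simp
  have hkey : ∀ b : ℕ, MvPowerSeries.coeff d
      ((1 - ∏ i ∈ insert (Fin.last n) (J.map Fin.castSuccEmb), (1 - MvPowerSeries.X i))^(k+b))
      = (((k+b).choose k : ℕ) : K) * ∑ a ∈ Finset.range (k+1),
          (-1:K)^a * (k.choose a) * c (b+a) := by
    intro b
    rw [aux_expand]
    have perj : ∀ j : ℕ, (-1:K)^(j+k) * (((k+b).choose j : ℕ) : K) * ((j.choose k : ℕ) : K)
        = (-1:K)^j * (((k+b).choose k : ℕ) : K) *
          ∑ a ∈ Finset.range (k+1), (-1:K)^a * ((k.choose a : ℕ) : K) * (((b+a).choose j : ℕ) : K) := by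
      intro j
      have := congrArg (fun z : ℤ => (z : K)) (aux_perj k b j)
      push_cast at this
      exact this
    have step1 : ∀ j ∈ Finset.range (k+b+1),
        (-1:K)^j * ((k+b).choose j) * ((-1:K)^k * (j.choose k) * q j)
        = (((k+b).choose k : ℕ) : K) * ∑ a ∈ Finset.range (k+1),
            (-1:K)^a * (k.choose a) * ((-1:K)^j * ((b+a).choose j) * q j) := by
      intro j _
      have h1 : (-1:K)^j * ((k+b).choose j) * ((-1:K)^k * (j.choose k) * q j)
          = ((-1:K)^(j+k) * ((k+b).choose j) * (j.choose k)) * q j := by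
        rw [pow_add]; ring
      rw [h1, perj j]
      conv_lhs => rw [Finset.mul_sum, Finset.sum_mul]
      conv_rhs => rw [Finset.mul_sum]
      refine Finset.sum_congr rfl fun a _ => ?_
      ring
    calc ∑ j ∈ Finset.range (k+b+1), (-1:K)^j * ((k+b).choose j) *
            MvPowerSeries.coeff d (∏ i ∈ insert (Fin.last n) (J.map Fin.castSuccEmb),
              (1 - MvPowerSeries.X i)^j)
        = ∑ j ∈ Finset.range (k+b+1), (((k+b).choose k : ℕ) : K) * ∑ a ∈ Finset.range (k+1),
            (-1:K)^a * (k.choose a) * ((-1:K)^j * ((b+a).choose j) * q j) := by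
          refine Finset.sum_congr rfl fun j hj => ?_
          rw [hcoeffSJ j]
          exact step1 j hj
      _ = (((k+b).choose k : ℕ) : K) * ∑ a ∈ Finset.range (k+1), (-1:K)^a * (k.choose a) *
            (∑ j ∈ Finset.range (k+b+1), (-1:K)^j * ((b+a).choose j) * q j) := by
          rw [← Finset.mul_sum, Finset.sum_comm]
          congr 1
          refine Finset.sum_congr rfl fun a _ => ?_
          rw [Finset.mul_sum]
      _ = (((k+b).choose k : ℕ) : K) * ∑ a ∈ Finset.range (k+1),
            (-1:K)^a * (k.choose a) * c (b+a) := by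
          congr 1
          refine Finset.sum_congr rfl fun a ha => ?_
          congr 1
          rw [hc (b+a)]
          symm
          apply Finset.sum_subset
          · apply Finset.range_subset_range.mpr
            have := Nat.lt_succ_iff.mp (mem_range.mp ha)
            omega
          · intro j _ hj
            rw [Nat.choose_eq_zero_of_lt (by simpa using hj)]
            simp
  -- A side
  have hA : (∑ m ∈ Finset.range (D + k + 1), g m *
        MvPowerSeries.coeff d
          ((1 - ∏ i ∈ insert (Fin.last n) (J.map Fin.castSuccEmb), (1 - MvPowerSeries.X i))^m))
      = ∑ b ∈ Finset.range (D+1), g (k+b) * ((((k+b).choose k : ℕ) : K) *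
          ∑ a ∈ Finset.range (k+1), (-1:K)^a * (k.choose a) * c (b+a)) := by
    conv_lhs => rw [Finset.range_eq_Ico]
    rw [← Finset.sum_Ico_consecutive _ (Nat.zero_le k) (by omega : k ≤ D + k + 1)]
    have e1 : ∑ m ∈ Finset.Ico 0 k, g m *
        MvPowerSeries.coeff d
          ((1 - ∏ i ∈ insert (Fin.last n) (J.map Fin.castSuccEmb), (1 - MvPowerSeries.X i))^m) = 0 :=
      Finset.sum_eq_zero fun m hm => by rw [hkey2 m (Finset.mem_Ico.mp hm).2, mul_zero]
    rw [e1, zero_add, Finset.sum_Ico_eq_sum_range]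
    have e2 : D + k + 1 - k = D + 1 := by omega
    rw [e2]
    exact Finset.sum_congr rfl fun b _ => by rw [hkey b]
  -- B side
  have hB : (∑ m ∈ Finset.range (D + 1),
        PowerSeries.coeff m ((1 - PowerSeries.X)^k * (PowerSeries.derivativeFun^[k] G)) * c m)
      = ∑ m ∈ Finset.range (D+1), ∑ p ∈ Finset.HasAntidiagonal.antidiagonal m,
          (-1:K)^p.1 * (k.choose p.1) * ((((k+p.2).descFactorial k : ℕ) : K) * g (k+p.2)) * c (p.1+p.2) := by
    refine Finset.sum_congr rfl fun m hm => ?_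
    rw [PowerSeries.coeff_mul, Finset.sum_mul]
    refine Finset.sum_congr rfl fun p hp => ?_
    have hpm : p.1 + p.2 = m := Finset.HasAntidiagonal.mem_antidiagonal.mp hp
    rw [aux_coeff_one_sub_X_pow_one, aux_deriv, hpm]
    have : p.2 + k = k + p.2 := Nat.add_comm _ _
    rw [this]
  rw [hA, hB]
  -- multiply in k! and compare double sums
  have hT : ∀ b ∈ Finset.range (D+1), (k.factorial : K) * (g (k+b) * ((((k+b).choose k : ℕ) : K) *
        ∑ a ∈ Finset.range (k+1), (-1:K)^a * (k.choose a) * c (b+a)))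
      = ∑ a ∈ Finset.range (k+1),
          (-1:K)^a * (k.choose a) * ((((k+b).descFactorial k : ℕ) : K) * g (k+b)) * c (a+b) := by
    intro b _
    have hdf : (((k+b).descFactorial k : ℕ) : K) = (k.factorial : K) * (((k+b).choose k : ℕ) : K) := by
      exact_mod_cast congrArg (fun z : ℕ => (z : K)) (Nat.descFactorial_eq_factorial_mul_choose (k+b) k)
    rw [Finset.mul_sum, Finset.mul_sum, Finset.mul_sum]
    refine Finset.sum_congr rfl fun a _ => ?_
    rw [hdf, Nat.add_comm b a]
    ring
  rw [Finset.mul_sum, Finset.sum_congr rfl hT]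
  -- reindex both double sums over a common set of pairs
  have hLHS : (∑ b ∈ Finset.range (D+1), ∑ a ∈ Finset.range (k+1),
        (-1:K)^a * (k.choose a) * ((((k+b).descFactorial k : ℕ) : K) * g (k+b)) * c (a+b))
      = ∑ p ∈ Finset.range (k+1) ×ˢ Finset.range (D+1),
        (-1:K)^p.1 * (k.choose p.1) * ((((k+p.2).descFactorial k : ℕ) : K) * g (k+p.2)) * c (p.1+p.2) := by
    rw [Finset.sum_product]
    exact Finset.sum_comm
  have hRHS : (∑ m ∈ Finset.range (D+1), ∑ p ∈ Finset.HasAntidiagonal.antidiagonal m,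
        (-1:K)^p.1 * (k.choose p.1) * ((((k+p.2).descFactorial k : ℕ) : K) * g (k+p.2)) * c (p.1+p.2))
      = ∑ p ∈ (Finset.range (D+1)).biUnion Finset.HasAntidiagonal.antidiagonal,
        (-1:K)^p.1 * (k.choose p.1) * ((((k+p.2).descFactorial k : ℕ) : K) * g (k+p.2)) * c (p.1+p.2) := by
    rw [Finset.sum_biUnion]
    intro x hx y hy hxy
    simp only [Function.onFun]
    rw [Finset.disjoint_left]
    intro p hpx hpy
    exact hxy ((Finset.HasAntidiagonal.mem_antidiagonal.mp hpx).symm.trans (Finset.HasAntidiagonal.mem_antidiagonal.mp hpy))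
  rw [hLHS, hRHS]
  apply aux_sum_eq
  · rintro ⟨a, b⟩ hp hnp
    simp only [Finset.mem_product, Finset.mem_range] at hp
    simp only [Finset.mem_biUnion, Finset.mem_range, Finset.HasAntidiagonal.mem_antidiagonal] at hnp
    have hab : D < a + b := by
      by_contra hcon
      exact hnp ⟨a + b, by omega, rfl⟩
    rw [hcz (a+b) hab]
    ring
  · rintro ⟨a, b⟩ hp hnp
    simp only [Finset.mem_biUnion, Finset.mem_range, Finset.HasAntidiagonal.mem_antidiagonal] at hp
    simp only [Finset.mem_product, Finset.mem_range, not_and] at hnp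
    obtain ⟨m, hm, hab⟩ := hp
    have ha : k < a := by
      by_contra hcon
      exact absurd (by omega : b < D + 1) (hnp (by omega))
    rw [Nat.choose_eq_zero_of_lt ha]
    push_cast
    ring

lemma aux_coeff_partialDeriv (m : ℕ) (G : PowerSeries K) (e : Fin m →₀ ℕ) :
    MvPowerSeries.coeff e (partialDeriv m G)
      = ∑ I : Finset (Fin m), ((-1:ℤ)^(m + I.card)) •
          ∑ u ∈ Finset.range (e.degree + 1), PowerSeries.coeff u G *
            MvPowerSeries.coeff e ((1 - ∏ i ∈ I, (1 - MvPowerSeries.X i))^u) := by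
  rw [partialDeriv, map_sum]
  refine Finset.sum_congr rfl fun I _ => ?_
  rw [map_zsmul]
  rfl

lemma aux_degree_d (n k : ℕ) (d' : Fin n →₀ ℕ) :
    (Finsupp.mapDomain (Fin.castSucc) d' + Finsupp.single (Fin.last n) k).degree
      = d'.degree + k := by
  have h1 : ∀ {σ : Type} [DecidableEq σ] (f : σ →₀ ℕ), True := fun _ => trivial
  show (Finsupp.mapDomain (Fin.castSucc) d' + Finsupp.single (Fin.last n) k).sum (fun _ e => e)
      = d'.sum (fun _ e => e) + k
  rw [Finsupp.sum_add_index' (fun _ => rfl) (fun _ _ _ => rfl),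
    Finsupp.sum_mapDomain_index (fun _ => rfl) (fun _ _ _ => rfl),
    Finsupp.sum_single_index rfl]


end Aux

/-- The formula
`(∂^n G)(x₁,…,x_{n+1}) = ∑_{k≥1} (1/k!) ∂^{n-1}((1-x)^k G^{(k)})(x₁,…,x_n) · x_{n+1}^k`
for `n ≥ 1`, stated coefficientwise: for every multi-exponent `d'` in the first `n`
variables and every exponent `k` of the last variable (only the term of index `k`
contributes, and the terms with `k = 0` vanish). -/
theorem partialDeriv_succ_eq (n : ℕ) (hn : 1 ≤ n) (G : PowerSeries K)
    (d' : Fin n →₀ ℕ) (k : ℕ) :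
    MvPowerSeries.coeff
        (Finsupp.mapDomain (Fin.castSucc) d' + Finsupp.single (Fin.last n) k)
        (partialDeriv (n + 1) G)
      = if k = 0 then 0
        else ((k.factorial : ℚ)⁻¹) •
          MvPowerSeries.coeff d'
            (partialDeriv n ((1 - PowerSeries.X) ^ k * (derivativeFun^[k] G))) := by
  classical
  have hcs_ne_last : ∀ i : Fin n, Fin.castSucc i ≠ Fin.last n :=
    fun i => (Fin.castSucc_lt_last i).ne
  set d : Fin (n+1) →₀ ℕ := Finsupp.mapDomain (Fin.castSucc) d' + Finsupp.single (Fin.last n) k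
    with hd
  have hd_last : d (Fin.last n) = k := by
    rw [hd, Finsupp.add_apply, Finsupp.single_eq_same, Finsupp.mapDomain_notin_range]
    · simp
    · rintro ⟨i, hi⟩
      exact hcs_ne_last i hi
  have hd_cs : ∀ i : Fin n, d (Fin.castSucc i) = d' i := by
    intro i
    rw [hd, Finsupp.add_apply, Finsupp.mapDomain_apply (Fin.castSucc_injective n),
      Finsupp.single_apply, if_neg (fun h => hcs_ne_last i h.symm), add_zero]
  have hd_deg : d.degree = d'.degree + k := aux_degree_d n k d'
  have hsupp_iff : ∀ J : Finset (Fin n),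
      (d.support ⊆ insert (Fin.last n) (J.map Fin.castSuccEmb) ↔ d'.support ⊆ J) := by
    intro J
    constructor
    · intro h i hi
      have h1 : d (Fin.castSucc i) ≠ 0 := by
        rw [hd_cs]
        exact Finsupp.mem_support_iff.mp hi
      have h2 := h (Finsupp.mem_support_iff.mpr h1)
      rcases Finset.mem_insert.mp h2 with h3 | h3
      · exact absurd h3 (hcs_ne_last i)
      · exact (Finset.mem_map' _).mp h3
    · intro h i hi
      revert hi
      refine Fin.lastCases ?_ ?_ i
      · intro _
        exact Finset.mem_insert_self _ _
      · intro i' hi'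
        have h1 : d' i' ≠ 0 := by
          rw [← hd_cs i']
          exact Finsupp.mem_support_iff.mp hi'
        refine Finset.mem_insert_of_mem ?_
        have h2 : Fin.castSuccEmb i' ∈ J.map Fin.castSuccEmb :=
          (Finset.mem_map' _).mpr (h (Finsupp.mem_support_iff.mpr h1))
        exact h2
  -- expansion of LHS
  have h0 : MvPowerSeries.coeff d (partialDeriv (n+1) G)
      = ∑ J : Finset (Fin n),
          (((-1:ℤ)^(n+1+J.card)) • ∑ u ∈ Finset.range (d'.degree + k + 1),
              PowerSeries.coeff u G *
              MvPowerSeries.coeff d ((1 - ∏ i ∈ J.map Fin.castSuccEmb, (1 - MvPowerSeries.X i))^u)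
           + ((-1:ℤ)^(n+1+(J.card+1))) • ∑ u ∈ Finset.range (d'.degree + k + 1),
              PowerSeries.coeff u G *
              MvPowerSeries.coeff d
                ((1 - ∏ i ∈ insert (Fin.last n) (J.map Fin.castSuccEmb), (1 - MvPowerSeries.X i))^u)) := by
    rw [aux_coeff_partialDeriv, hd_deg,
      aux_split (fun I => ((-1:ℤ)^(n+1+I.card)) • ∑ u ∈ Finset.range (d'.degree + k + 1),
        PowerSeries.coeff u G *
        MvPowerSeries.coeff d ((1 - ∏ i ∈ I, (1 - MvPowerSeries.X i))^u))]
    refine Finset.sum_congr rfl fun J _ => ?_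
    rw [Finset.card_map, Finset.card_insert_of_notMem (aux_last_not_mem n J), Finset.card_map]
  by_cases hk : k = 0
  · rw [if_pos hk, h0]
    apply Finset.sum_eq_zero
    intro J _
    have hlast_not : Fin.last n ∉ d.support := by
      rw [Finsupp.mem_support_iff]
      simp [hd_last, hk]
    have hAeq : ∀ u : ℕ,
        MvPowerSeries.coeff (R := K) d
          ((1 - ∏ i ∈ insert (Fin.last n) (J.map Fin.castSuccEmb), (1 - MvPowerSeries.X i))^u)
        = MvPowerSeries.coeff (R := K) d ((1 - ∏ i ∈ J.map Fin.castSuccEmb, (1 - MvPowerSeries.X i))^u) := by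
      intro u
      rw [aux_expand, aux_expand]
      refine Finset.sum_congr rfl fun j _ => ?_
      congr 1
      rw [aux_coeff_prod, aux_coeff_prod]
      by_cases hs : d.support ⊆ J.map Fin.castSuccEmb
      · rw [if_pos ((Finset.subset_insert_iff_of_notMem hlast_not).mpr hs), if_pos hs,
          Finset.prod_insert (aux_last_not_mem n J), hd_last, hk]
        simp
      · rw [if_neg (fun hh => hs ((Finset.subset_insert_iff_of_notMem hlast_not).mp hh)),
          if_neg hs]
    simp only [hAeq]
    rw [← add_smul]
    have : ((-1:ℤ)^(n+1+J.card) + (-1:ℤ)^(n+1+(J.card+1))) = 0 := by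
      rw [show n+1+(J.card+1) = (n+1+J.card)+1 from rfl, pow_succ]
      ring
    rw [this, zero_smul]
  · rw [if_neg hk, h0]
    -- first summand vanishes
    have hA0 : ∀ J : Finset (Fin n), ∀ u : ℕ,
        MvPowerSeries.coeff (R := K) d ((1 - ∏ i ∈ J.map Fin.castSuccEmb, (1 - MvPowerSeries.X i))^u) = 0 := by
      intro J u
      rw [aux_expand]
      refine Finset.sum_eq_zero fun j _ => ?_
      rw [aux_coeff_prod, if_neg, mul_zero]
      intro hsub
      have h1 : Fin.last n ∈ d.support := Finsupp.mem_support_iff.mpr (by rw [hd_last]; exact hk)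
      exact aux_last_not_mem n J (hsub h1)
    have hstep : ∀ J : Finset (Fin n),
        (((-1:ℤ)^(n+1+J.card)) • ∑ u ∈ Finset.range (d'.degree + k + 1),
            PowerSeries.coeff u G *
            MvPowerSeries.coeff d ((1 - ∏ i ∈ J.map Fin.castSuccEmb, (1 - MvPowerSeries.X i))^u)
         + ((-1:ℤ)^(n+1+(J.card+1))) • ∑ u ∈ Finset.range (d'.degree + k + 1),
            PowerSeries.coeff u G *
            MvPowerSeries.coeff d
              ((1 - ∏ i ∈ insert (Fin.last n) (J.map Fin.castSuccEmb), (1 - MvPowerSeries.X i))^u))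
        = ((-1:K)^(n+J.card)) * ∑ u ∈ Finset.range (d'.degree + k + 1),
            PowerSeries.coeff u G *
            MvPowerSeries.coeff d
              ((1 - ∏ i ∈ insert (Fin.last n) (J.map Fin.castSuccEmb), (1 - MvPowerSeries.X i))^u) := by
      intro J
      have hz : (∑ u ∈ Finset.range (d'.degree + k + 1),
          PowerSeries.coeff u G *
          MvPowerSeries.coeff d ((1 - ∏ i ∈ J.map Fin.castSuccEmb, (1 - MvPowerSeries.X i))^u)) = 0 :=
        Finset.sum_eq_zero fun u _ => by rw [hA0 J u, mul_zero]
      rw [hz, smul_zero, zero_add, zsmul_eq_mul]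
      push_cast
      congr 1
      rw [show n+1+(J.card+1) = (n+J.card)+2 from by ring, pow_add]
      ring
    rw [Finset.sum_congr rfl (fun J _ => hstep J)]
    -- RHS expansion
    rw [aux_coeff_partialDeriv]
    rw [Finset.smul_sum]
    refine Finset.sum_congr rfl fun J _ => ?_
    have hm := aux_main n k G d' J d hd_last hd_cs (hsupp_iff J)
    rw [zsmul_eq_mul, show ((((-1:ℤ)^(n+J.card)) : ℤ) : K) = (-1:K)^(n+J.card) from by push_cast; ring,
      ← hm]
    have hkne : (k.factorial : ℚ) ≠ 0 := Nat.cast_ne_zero.mpr k.factorial_ne_zero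
    have hgen : ∀ x y : K, (k.factorial:ℚ)⁻¹ • (x * ((k.factorial:K) * y)) = x * y := by
      intro x y
      rw [← mul_smul_comm]
      congr 1
      have hky : (k.factorial : ℚ) • y = (k.factorial : K) * y := by
        rw [Nat.cast_smul_eq_nsmul, nsmul_eq_mul]
      rw [← hky, smul_smul, inv_mul_cancel₀ hkne, one_smul]
    exact (hgen _ _).symm
end

section
/- Let $G(x) = \sum_{i \ge 1} a_i x^i$ be a power series over a $\mathbb{Q}$-algebra $K$ and let $\partial$ be the partial derivative for the multiplicative formal group law $x * y = x + y - xy$. Then for positive integers $j \le s$, the coefficient of $x^j y^s$ in $(\partial G)(x, y)$ is $\sum_{i=0}^{j} (-1)^{j-i} \binom{s+i}{s} \binom{s}{j-i} a_{s+i}$. -/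
variable {K : Type*} [CommRing K]

/-- The partial derivative `∂G(x,y) = G(x+y-xy) - G(x) - G(y) + G(0)` of a one-variable
power series with respect to the multiplicative formal group law. -/
noncomputable def deriv2 (G : PowerSeries K) : MvPowerSeries (Fin 2) K :=
  psubst (MvPowerSeries.X 0 + MvPowerSeries.X 1 - MvPowerSeries.X 0 * MvPowerSeries.X 1) G
    - psubst (MvPowerSeries.X 0) G - psubst (MvPowerSeries.X 1) G
    + MvPowerSeries.C (PowerSeries.constantCoeff G)

open Finset in
private lemma fseq (j s p q : ℕ) :
    Finsupp.single (0 : Fin 2) p + Finsupp.single (1 : Fin 2) q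
      = Finsupp.single (0 : Fin 2) j + Finsupp.single (1 : Fin 2) s ↔ p = j ∧ q = s := by
  constructor
  · intro h
    constructor
    · have := DFunLike.congr_fun h 0
      simpa using this
    · have := DFunLike.congr_fun h 1
      simpa using this
  · rintro ⟨rfl, rfl⟩; rfl

open Finset MvPolynomial in
private lemma mono_calc {σ : Type*} (m1 m2 : σ →₀ ℕ) (x y z w : K) :
    (monomial m1 x : MvPolynomial σ K) * C y * monomial m2 z * C w
      = monomial (m1 + m2) (x * y * z * w) := by
  simp only [C_apply, monomial_mul, add_zero, mul_assoc]

open Finset MvPolynomial in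
private lemma coeff_P_pow (j s n : ℕ) :
    MvPolynomial.coeff (Finsupp.single (0 : Fin 2) j + Finsupp.single (1 : Fin 2) s)
      ((X 0 + X 1 - X 0 * X 1 : MvPolynomial (Fin 2) K) ^ n)
    = if s ≤ n ∧ n ≤ s + j ∧ j ≤ n then
        (-1 : K) ^ (j - (n - s)) *
          ((n.choose (n - (j - (n - s))) * (n - (j - (n - s))).choose (n - s) : ℕ) : K)
      else 0 := by
  have expand : (X 0 + X 1 - X 0 * X 1 : MvPolynomial (Fin 2) K) ^ n
      = ∑ c ∈ range (n + 1), ∑ a ∈ range (c + 1),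
          monomial (Finsupp.single (0 : Fin 2) (a + (n - c)) + Finsupp.single 1 (n - a))
            ((-1 : K) ^ (n - c) * ((n.choose c * c.choose a : ℕ) : K)) := by
    rw [show (X 0 + X 1 - X 0 * X 1 : MvPolynomial (Fin 2) K)
        = (X 0 + X 1) + (-(X 0 * X 1)) by ring, add_pow]
    refine Finset.sum_congr rfl fun c hc => ?_
    rw [add_pow, Finset.sum_mul, Finset.sum_mul]
    refine Finset.sum_congr rfl fun a ha => ?_
    simp only [Finset.mem_range, Nat.lt_succ_iff] at hc ha
    have h1 : (X 0 : MvPolynomial (Fin 2) K) ^ a * X 1 ^ (c - a)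
        = monomial (Finsupp.single 0 a + Finsupp.single 1 (c - a)) 1 := by
      rw [X_pow_eq_monomial, X_pow_eq_monomial, monomial_mul, one_mul]
    have h2 : (-(X 0 * X 1) : MvPolynomial (Fin 2) K) ^ (n - c)
        = monomial (Finsupp.single 0 (n - c) + Finsupp.single 1 (n - c)) ((-1 : K) ^ (n - c)) := by
      rw [neg_pow, mul_pow, X_pow_eq_monomial, X_pow_eq_monomial, monomial_mul, one_mul,
        show ((-1 : MvPolynomial (Fin 2) K) ^ (n - c)) = C ((-1 : K) ^ (n - c)) by simp,
        C_mul_monomial, mul_one]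
    have h3 : ((c.choose a : ℕ) : MvPolynomial (Fin 2) K) = C ((c.choose a : ℕ) : K) := by
      simp
    have h4 : ((n.choose c : ℕ) : MvPolynomial (Fin 2) K) = C ((n.choose c : ℕ) : K) := by
      simp
    rw [h1, h2, h3, h4, mono_calc]
    have h5 : n - a = (c - a) + (n - c) := by omega
    congr 1
    · rw [h5, Finsupp.single_add (a := (1 : Fin 2)), Finsupp.single_add (a := (0 : Fin 2))]
      abel
    · push_cast
      ring
  rw [expand]
  rw [coeff_sum]
  simp only [coeff_sum, coeff_monomial, fseq]
  by_cases h : s ≤ n ∧ n ≤ s + j ∧ j ≤ n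
  · rw [if_pos h]
    obtain ⟨hsn, hnsj, hjn⟩ := h
    rw [Finset.sum_eq_single (n - (j - (n - s)))]
    · rw [Finset.sum_eq_single (n - s)]
      · rw [if_pos (by constructor <;> omega)]
        congr 2 <;> omega
      · intro a ha hane
        rw [if_neg]
        simp only [Finset.mem_range, Nat.lt_succ_iff] at ha
        rintro ⟨h1, h2⟩
        omega
      · intro hmem
        exfalso
        apply hmem
        simp only [Finset.mem_range, Nat.lt_succ_iff]
        omega
    · intro c hc hcne
      apply Finset.sum_eq_zero
      intro a ha
      simp only [Finset.mem_range, Nat.lt_succ_iff] at hc ha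
      rw [if_neg]
      rintro ⟨h1, h2⟩
      omega
    · intro hmem
      exfalso
      apply hmem
      simp only [Finset.mem_range, Nat.lt_succ_iff]
      omega
  · rw [if_neg h]
    apply Finset.sum_eq_zero
    intro c hc
    apply Finset.sum_eq_zero
    intro a ha
    simp only [Finset.mem_range, Nat.lt_succ_iff] at hc ha
    rw [if_neg]
    rintro ⟨h1, h2⟩
    exact h ⟨by omega, by omega, by omega⟩


/-- For `G(x) = ∑_{i≥1} aᵢ xⁱ` over a `ℚ`-algebra and positive integers `j ≤ s`, the
coefficient of `x^j y^s` in `∂G` is `∑_{i=0}^{j} (-1)^{j-i} C(s+i,s) C(s,j-i) a_{s+i}`. -/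
theorem coeff_deriv2 [Algebra ℚ K] (G : PowerSeries K)
    (hG : PowerSeries.constantCoeff G = 0) (j s : ℕ) (hj : 1 ≤ j) (hjs : j ≤ s) :
    MvPowerSeries.coeff (Finsupp.single (0 : Fin 2) j + Finsupp.single (1 : Fin 2) s)
        (deriv2 G)
      = ∑ i ∈ Finset.range (j + 1),
          (-1 : K) ^ (j - i) * ((s + i).choose s : K) * (s.choose (j - i) : K)
            * PowerSeries.coeff (s + i) G := by
  classical
  set d : Fin 2 →₀ ℕ := Finsupp.single (0 : Fin 2) j + Finsupp.single (1 : Fin 2) s with hd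
  have hd0 : d 0 = j := by simp [hd, Finsupp.single_apply]
  have hd1 : d 1 = s := by simp [hd, Finsupp.single_apply]
  have hdsum : (d.sum fun _ e => e) = j + s := by
    rw [hd]
    rw [Finsupp.sum_add_index' (fun _ => rfl) (fun _ _ _ => rfl)]
    rw [Finsupp.sum_single_index rfl, Finsupp.sum_single_index rfl]
  have hx0 : MvPowerSeries.coeff d (psubst (MvPowerSeries.X 0) G) = 0 := by
    rw [MvPowerSeries.coeff_apply]
    simp only [psubst]
    apply Finset.sum_eq_zero
    intro n _
    rw [MvPowerSeries.coeff_X_pow, if_neg, mul_zero]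
    intro h
    have := DFunLike.congr_fun h 1
    rw [hd1] at this
    simp only [Finsupp.single_apply] at this
    simp at this
    omega
  have hx1 : MvPowerSeries.coeff d (psubst (MvPowerSeries.X 1) G) = 0 := by
    rw [MvPowerSeries.coeff_apply]
    simp only [psubst]
    apply Finset.sum_eq_zero
    intro n _
    rw [MvPowerSeries.coeff_X_pow, if_neg, mul_zero]
    intro h
    have := DFunLike.congr_fun h 0
    rw [hd0] at this
    simp only [Finsupp.single_apply] at this
    simp at this
    omega
  have hcoe : (MvPowerSeries.X 0 + MvPowerSeries.X 1
        - MvPowerSeries.X 0 * MvPowerSeries.X 1 : MvPowerSeries (Fin 2) K)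
      = ((MvPolynomial.X 0 + MvPolynomial.X 1 - MvPolynomial.X 0 * MvPolynomial.X 1 :
          MvPolynomial (Fin 2) K) : MvPowerSeries (Fin 2) K) := by
    rw [← MvPolynomial.coeToMvPowerSeries.ringHom_apply, map_sub, map_add, map_mul]
    simp [MvPolynomial.coeToMvPowerSeries.ringHom_apply, MvPolynomial.coe_X]
  have hmain : MvPowerSeries.coeff d (psubst (MvPowerSeries.X 0 + MvPowerSeries.X 1
        - MvPowerSeries.X 0 * MvPowerSeries.X 1) G)
      = ∑ n ∈ Finset.range (j + s + 1), PowerSeries.coeff n G *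
          (if s ≤ n ∧ n ≤ s + j ∧ j ≤ n then
            (-1 : K) ^ (j - (n - s)) *
              ((n.choose (n - (j - (n - s))) * (n - (j - (n - s))).choose (n - s) : ℕ) : K)
          else 0) := by
    rw [MvPowerSeries.coeff_apply]
    simp only [psubst, hdsum]
    refine Finset.sum_congr rfl fun n _ => ?_
    rw [hcoe, ← MvPolynomial.coe_pow, MvPolynomial.coeff_coe, coeff_P_pow]
  rw [deriv2, hG, map_zero, map_add, map_zero, add_zero, map_sub, map_sub, hx0, hx1,
    sub_zero, sub_zero, hmain]
  rw [show j + s + 1 = s + (j + 1) by omega, Finset.sum_range_add]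
  rw [Finset.sum_eq_zero (fun n hn => by
    rw [if_neg, mul_zero]
    simp only [Finset.mem_range] at hn
    omega), zero_add]
  refine Finset.sum_congr rfl fun i hi => ?_
  simp only [Finset.mem_range, Nat.lt_succ_iff] at hi
  rw [if_pos ⟨by omega, by omega, by omega⟩]
  have e1 : s + i - s = i := by omega
  rw [e1]
  have e2 : (s + i).choose (s + i - (j - i)) * (s + i - (j - i)).choose i
      = (s + i).choose s * s.choose (j - i) := by
    rw [Nat.choose_symm (by omega : j - i ≤ s + i)]
    rw [Nat.choose_symm_of_eq_add (show s + i - (j - i) = i + (s - (j - i)) by omega)]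
    exact (Nat.choose_mul (n := s + i) (by omega : j - i ≤ s)).symm
  rw [e2]
  push_cast
  ring
end
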